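/- arXiv:1210.7503 — 3 statements merged into one kernel-verified Lean document; each statement's English description precedes it below -/
import Mathlib

section
/- Let m >= 1 and let x_i = 1 for 1 <= i <= m and x_i = -1 for m+1 <= i <= 2m. Then the average over all (2m)! permutations sigma of max_{1<=k<=2m-1} | (sum_{i=1}^k x_{sigma(i)})^2 - k(2m-k)/(2m-1) |^2 is at most 128 m^2. -/
open MeasureTheory Finset

noncomputable section

instance permMS (n : ℕ) : MeasurableSpace (Equiv.Perm (Fin n)) := ⊤

instance permNE (n : ℕ) : Nonempty (Equiv.Perm (Fin n)) := ⟨1⟩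

/-- uniform probability measure on the n! orderings: sampling without replacement. -/
def permMeasure (n : ℕ) : Measure (Equiv.Perm (Fin n)) :=
  (PMF.uniformOfFintype (Equiv.Perm (Fin n))).toMeasure

/-- `X n x i σ` : the `(i+1)`-st sample (0-based `i`) drawn without replacement. -/
def X (n : ℕ) (x : Fin n → ℝ) (i : ℕ) (σ : Equiv.Perm (Fin n)) : ℝ :=
  if h : i < n then x (σ ⟨i, h⟩) else 0

/-- partial sum `S_k = X_1 + ⋯ + X_k`. -/
def S (n : ℕ) (x : Fin n → ℝ) (k : ℕ) (σ : Equiv.Perm (Fin n)) : ℝ :=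
  ∑ i ∈ Finset.range k, X n x i σ

/-- partial sum of squares `T_k = X_1^2 + ⋯ + X_k^2`. -/
def T (n : ℕ) (x : Fin n → ℝ) (k : ℕ) (σ : Equiv.Perm (Fin n)) : ℝ :=
  ∑ i ∈ Finset.range k, (X n x i σ) ^ 2

/-- `F_k = σ(X_1, ..., X_k)`. -/
def F (n : ℕ) (x : Fin n → ℝ) (k : ℕ) : MeasurableSpace (Equiv.Perm (Fin n)) :=
  MeasurableSpace.comap (fun σ => fun i : Fin k => X n x i σ) inferInstance

namespace Aux14

variable {m : ℕ} {x : Fin (2*m) → ℝ}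

lemma X_eq {i : ℕ} (h : i < 2*m) (σ : Equiv.Perm (Fin (2*m))) :
    X (2*m) x i σ = x (σ ⟨i, h⟩) := dif_pos h

lemma hx_pm (hx : ∀ i : Fin (2 * m), x i = if (i : ℕ) < m then 1 else -1) (i : Fin (2*m)) :
    x i ^ 2 = 1 := by
  rw [hx i]; split <;> norm_num

lemma X_sq (hx : ∀ i : Fin (2 * m), x i = if (i : ℕ) < m then 1 else -1)
    {i : ℕ} (h : i < 2*m) (σ : Equiv.Perm (Fin (2*m))) : X (2*m) x i σ ^ 2 = 1 := by
  rw [X_eq h]; exact hx_pm hx _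

lemma sum_x (hx : ∀ i : Fin (2 * m), x i = if (i : ℕ) < m then 1 else -1) :
    ∑ i : Fin (2*m), x i = 0 := by
  have : ∑ i : Fin (2*m), x i = ∑ i ∈ range (2*m), (if i < m then (1:ℝ) else -1) := by
    rw [← Fin.sum_univ_eq_sum_range (fun i => if i < m then (1:ℝ) else -1)]
    exact Finset.sum_congr rfl (fun i _ => hx i)
  rw [this, Finset.range_eq_Ico, ← Finset.sum_Ico_consecutive _ (Nat.zero_le m) (by omega : m ≤ 2*m)]
  have h2 : ∑ i ∈ Ico 0 m, (if i < m then (1:ℝ) else -1) = m := by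
    rw [Finset.sum_congr rfl (fun i hi => if_pos (Finset.mem_Ico.mp hi).2)]
    simp
  have h3 : ∑ i ∈ Ico m (2*m), (if i < m then (1:ℝ) else -1) = -m := by
    rw [Finset.sum_congr rfl (fun i hi => if_neg (Nat.not_lt.mpr (Finset.mem_Ico.mp hi).1))]
    have hc : 2*m - m = m := by omega
    simp [Nat.card_Ico, hc]
  rw [h2, h3]; ring

lemma S_top (hx : ∀ i : Fin (2 * m), x i = if (i : ℕ) < m then 1 else -1)
    (σ : Equiv.Perm (Fin (2*m))) : S (2*m) x (2*m) σ = 0 := by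
  have h1 : S (2*m) x (2*m) σ = ∑ i : Fin (2*m), x (σ i) := by
    rw [S, ← Fin.sum_univ_eq_sum_range (fun i => X (2*m) x i σ)]
    exact Finset.sum_congr rfl (fun i _ => by rw [X_eq i.isLt])
  rw [h1, Equiv.sum_comp σ x, sum_x hx]

lemma S_swap {k : ℕ} {a b : Fin (2*m)} (ha : k ≤ a.val) (hb : k ≤ b.val)
    (σ : Equiv.Perm (Fin (2*m))) :
    S (2*m) x k (σ * Equiv.swap a b) = S (2*m) x k σ := by
  unfold S
  refine Finset.sum_congr rfl (fun i hi => ?_)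
  have hik : i < k := Finset.mem_range.mp hi
  have hin : i < 2*m := lt_of_lt_of_le (lt_of_lt_of_le hik ha) (Nat.le_of_lt a.isLt)
  rw [X_eq hin, X_eq hin, Equiv.Perm.mul_apply,
    Equiv.swap_apply_of_ne_of_ne (Fin.ne_of_val_ne (by simp only [Fin.val_mk]; omega)) (Fin.ne_of_val_ne (by simp only [Fin.val_mk]; omega))]


def Inv (m k : ℕ) (φ : Equiv.Perm (Fin (2*m)) → ℝ) : Prop :=
  ∀ (σ : Equiv.Perm (Fin (2*m))) (a b : Fin (2*m)), k ≤ a.val → k ≤ b.val →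
    φ (σ * Equiv.swap a b) = φ σ

lemma condexp (hx : ∀ i : Fin (2 * m), x i = if (i : ℕ) < m then 1 else -1)
    {k : ℕ} (hk : k < 2*m) {φ : Equiv.Perm (Fin (2*m)) → ℝ} (hφ : Inv m k φ) :
    (2*(m:ℝ) - k) * ∑ σ : Equiv.Perm (Fin (2*m)), X (2*m) x k σ * φ σ
      = - ∑ σ : Equiv.Perm (Fin (2*m)), S (2*m) x k σ * φ σ := by
  have swap_eq : ∀ j, k ≤ j → (hj : j < 2*m) →
      (∑ σ : Equiv.Perm (Fin (2*m)), X (2*m) x j σ * φ σ)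
        = ∑ σ : Equiv.Perm (Fin (2*m)), X (2*m) x k σ * φ σ := by
    intro j hkj hj
    refine Fintype.sum_equiv (Equiv.mulRight (Equiv.swap (⟨k, hk⟩ : Fin (2*m)) ⟨j, hj⟩))
      _ _ (fun σ => ?_)
    simp only [Equiv.coe_mulRight]
    rw [hφ σ _ _ le_rfl hkj, X_eq hk, Equiv.Perm.mul_apply, Equiv.swap_apply_left,
      X_eq hj]
  have key : ∑ j ∈ Ico k (2*m), ∑ σ : Equiv.Perm (Fin (2*m)), X (2*m) x j σ * φ σ
      = ((2*m - k : ℕ) : ℝ) * ∑ σ : Equiv.Perm (Fin (2*m)), X (2*m) x k σ * φ σ := by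
    rw [Finset.sum_congr rfl (fun j hj => swap_eq j (Finset.mem_Ico.mp hj).1 (Finset.mem_Ico.mp hj).2)]
    rw [Finset.sum_const, Nat.card_Ico, nsmul_eq_mul]
  rw [Finset.sum_comm] at key
  have split : ∀ σ : Equiv.Perm (Fin (2*m)),
      ∑ j ∈ Ico k (2*m), X (2*m) x j σ = - S (2*m) x k σ := by
    intro σ
    have := Finset.sum_Ico_consecutive (fun j => X (2*m) x j σ) (Nat.zero_le k) (le_of_lt hk)
    have h0 : S (2*m) x (2*m) σ = 0 := S_top hx σ
    unfold S at h0 ⊢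
    rw [Finset.range_eq_Ico] at h0 ⊢
    linarith [this, h0]
  rw [Finset.sum_congr rfl (fun σ _ => by rw [← Finset.sum_mul, split σ])] at key
  have hcast : ((2*m - k : ℕ) : ℝ) = 2*(m:ℝ) - k := by
    push_cast [Nat.cast_sub (le_of_lt hk)]; ring
  rw [hcast] at key
  rw [← key]
  rw [← Finset.sum_neg_distrib]
  exact Finset.sum_congr rfl (fun σ _ => by ring)

lemma S_Inv {j k : ℕ} (hjk : j ≤ k) : Inv m k (fun σ => S (2*m) x j σ) :=
  fun σ a b ha hb => S_swap (le_trans hjk ha) (le_trans hjk hb) σ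

lemma step2 (hx : ∀ i : Fin (2 * m), x i = if (i : ℕ) < m then 1 else -1)
    {k : ℕ} (hk : k < 2*m) {φ : Equiv.Perm (Fin (2*m)) → ℝ} (hφ : Inv m k φ) :
    (2*(m:ℝ) - k) * ∑ σ : Equiv.Perm (Fin (2*m)), S (2*m) x (k+1) σ ^ 2 * φ σ
      = (2*(m:ℝ) - k - 2) * (∑ σ : Equiv.Perm (Fin (2*m)), S (2*m) x k σ ^ 2 * φ σ)
        + (2*(m:ℝ) - k) * ∑ σ : Equiv.Perm (Fin (2*m)), φ σ := by
  have hInv' : Inv m k (fun σ => S (2*m) x k σ * φ σ) := fun σ a b ha hb => by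
    simp only; rw [S_swap ha hb, hφ σ a b ha hb]
  have hce := condexp hx hk hInv'
  rw [Finset.sum_congr rfl (fun σ _ => (by ring :
    S (2*m) x k σ * (S (2*m) x k σ * φ σ) = S (2*m) x k σ ^ 2 * φ σ))] at hce
  have expand : ∀ σ : Equiv.Perm (Fin (2*m)), S (2*m) x (k+1) σ ^2 * φ σ
      = S (2*m) x k σ^2 * φ σ + 2 * (X (2*m) x k σ * (S (2*m) x k σ * φ σ)) + φ σ := by
    intro σ
    have hSucc : S (2*m) x (k+1) σ = S (2*m) x k σ + X (2*m) x k σ :=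
      Finset.sum_range_succ _ _
    have hx2 : X (2*m) x k σ ^ 2 = 1 := X_sq hx hk σ
    rw [hSucc]; linear_combination (φ σ) * hx2
  rw [Finset.sum_congr rfl (fun σ _ => expand σ), Finset.sum_add_distrib,
    Finset.sum_add_distrib, ← Finset.mul_sum]
  linear_combination 2 * hce

lemma step4 (hx : ∀ i : Fin (2 * m), x i = if (i : ℕ) < m then 1 else -1)
    {k : ℕ} (hk : k < 2*m) :
    (2*(m:ℝ) - k) * ∑ σ : Equiv.Perm (Fin (2*m)), S (2*m) x (k+1) σ ^ 4
      = (2*(m:ℝ) - k - 4) * (∑ σ : Equiv.Perm (Fin (2*m)), S (2*m) x k σ ^ 4)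
        + (6*(2*(m:ℝ) - k) - 4) * (∑ σ : Equiv.Perm (Fin (2*m)), S (2*m) x k σ ^ 2)
        + (2*(m:ℝ) - k) * ∑ σ : Equiv.Perm (Fin (2*m)), (1:ℝ) := by
  have hc3 := condexp hx hk (φ := fun σ => S (2*m) x k σ ^ 3)
    (fun σ a b ha hb => by simp only; rw [S_swap ha hb])
  rw [Finset.sum_congr rfl (fun σ _ => (by ring :
    S (2*m) x k σ * (fun σ => S (2*m) x k σ ^ 3) σ = S (2*m) x k σ ^ 4))] at hc3
  have hc1 := condexp hx hk (φ := fun σ => S (2*m) x k σ)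
    (fun σ a b ha hb => by simp only; rw [S_swap ha hb])
  rw [Finset.sum_congr rfl (fun σ _ => (by ring :
    S (2*m) x k σ * (fun σ => S (2*m) x k σ) σ = S (2*m) x k σ ^ 2))] at hc1
  have expand : ∀ σ : Equiv.Perm (Fin (2*m)), S (2*m) x (k+1) σ ^ 4
      = S (2*m) x k σ^4 + 4 * (X (2*m) x k σ * S (2*m) x k σ ^ 3)
        + 6 * S (2*m) x k σ^2 + 4 * (X (2*m) x k σ * S (2*m) x k σ) + 1 := by
    intro σ
    have hSucc : S (2*m) x (k+1) σ = S (2*m) x k σ + X (2*m) x k σ :=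
      Finset.sum_range_succ _ _
    have hx2 : X (2*m) x k σ ^ 2 = 1 := X_sq hx hk σ
    rw [hSucc]
    linear_combination (6 * S (2*m) x k σ^2 + 4 * S (2*m) x k σ * X (2*m) x k σ
      + X (2*m) x k σ^2 + 1) * hx2
  rw [Finset.sum_congr rfl (fun σ _ => expand σ)]
  simp only [Finset.sum_add_distrib, ← Finset.mul_sum]
  linear_combination 4 * hc3 + 4 * hc1

/-- expected value of `S_k ^ 2` -/
def muf (m k : ℕ) : ℝ := (k : ℝ) * (2*(m:ℝ) - (k:ℝ)) / (2*(m:ℝ) - 1)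

/-- expected value of `S_k ^ 4` -/
def alf (m k : ℕ) : ℝ :=
  (k:ℝ) + 3*(k:ℝ)*((k:ℝ)-1)
    - (4*(k:ℝ)*((k:ℝ)-1) + 6*(k:ℝ)*((k:ℝ)-1)*((k:ℝ)-2))/(2*(m:ℝ)-1)
    + 3*(k:ℝ)*((k:ℝ)-1)*((k:ℝ)-2)*((k:ℝ)-3)/((2*(m:ℝ)-1)*(2*(m:ℝ)-3))

/-- the martingale -/
def Mf (m : ℕ) (x : Fin (2*m) → ℝ) (k : ℕ) (σ : Equiv.Perm (Fin (2*m))) : ℝ :=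
  (S (2*m) x k σ ^ 2 - muf m k) / ((2*(m:ℝ) - (k:ℝ)) * (2*(m:ℝ) - (k:ℝ) - 1))

lemma sum_one : ∑ _σ : Equiv.Perm (Fin (2*m)), (1:ℝ) = (Nat.factorial (2*m) : ℝ) := by
  simp [Finset.card_univ, Fintype.card_perm, Fintype.card_fin]

lemma Inv_one {k : ℕ} : Inv m k (fun _ => (1:ℝ)) := fun _ _ _ _ _ => rfl

lemma B_closed (hm : 2 ≤ m) (hx : ∀ i : Fin (2 * m), x i = if (i : ℕ) < m then 1 else -1)
    {k : ℕ} (hk : k ≤ m) :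
    ∑ σ : Equiv.Perm (Fin (2*m)), S (2*m) x k σ ^ 2 = (Nat.factorial (2*m) : ℝ) * muf m k := by
  induction k with
  | zero => simp [S, muf]
  | succ k ih =>
    have hk' : k < m := hk
    have hkn : k < 2*m := by omega
    have h2 := step2 hx hkn (Inv_one (k := k))
    simp only [mul_one] at h2
    rw [sum_one, ih (le_of_lt hk')] at h2
    have hc : (0:ℝ) < 2*(m:ℝ) - k := by
      have : (k:ℝ) < m := by exact_mod_cast hk'
      nlinarith [this]
    have hm1 : (2*(m:ℝ) - 1) ≠ 0 := by
      have : (2:ℝ) ≤ m := by exact_mod_cast hm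
      nlinarith [this]
    apply mul_left_cancel₀ (ne_of_gt hc)
    rw [h2]
    unfold muf
    push_cast
    field_simp
    ring

lemma A_closed (hm : 2 ≤ m) (hx : ∀ i : Fin (2 * m), x i = if (i : ℕ) < m then 1 else -1)
    {k : ℕ} (hk : k ≤ m) :
    ∑ σ : Equiv.Perm (Fin (2*m)), S (2*m) x k σ ^ 4 = (Nat.factorial (2*m) : ℝ) * alf m k := by
  induction k with
  | zero => simp [S, alf]
  | succ k ih =>
    have hk' : k < m := hk
    have hkn : k < 2*m := by omega
    have h4 := step4 hx hkn
    rw [sum_one, ih (le_of_lt hk'), B_closed hm hx (le_of_lt hk')] at h4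
    have hc : (0:ℝ) < 2*(m:ℝ) - k := by
      have : (k:ℝ) < m := by exact_mod_cast hk'
      nlinarith [this]
    have hm2 : (2:ℝ) ≤ m := by exact_mod_cast hm
    have hm1 : (2*(m:ℝ) - 1) ≠ 0 := by nlinarith [hm2]
    have hm3 : (2*(m:ℝ) - 3) ≠ 0 := by nlinarith [hm2]
    apply mul_left_cancel₀ (ne_of_gt hc)
    rw [h4]
    unfold alf muf
    push_cast
    field_simp
    ring

lemma Mf_sum_eq {k : ℕ} (μv d : ℝ) (φ : Equiv.Perm (Fin (2*m)) → ℝ) :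
    ∑ σ : Equiv.Perm (Fin (2*m)), ((S (2*m) x k σ ^ 2 - μv) / d) * φ σ
      = ((∑ σ : Equiv.Perm (Fin (2*m)), S (2*m) x k σ ^ 2 * φ σ)
          - μv * ∑ σ : Equiv.Perm (Fin (2*m)), φ σ) / d := by
  rw [Finset.sum_congr rfl (fun σ _ => (by ring :
    ((S (2*m) x k σ ^ 2 - μv) / d) * φ σ = (S (2*m) x k σ ^ 2 * φ σ - μv * φ σ)/d)),
    ← Finset.sum_div, Finset.sum_sub_distrib, ← Finset.mul_sum]

lemma mart (hm : 2 ≤ m) (hx : ∀ i : Fin (2 * m), x i = if (i : ℕ) < m then 1 else -1)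
    {k : ℕ} (hk : k < m) {φ : Equiv.Perm (Fin (2*m)) → ℝ} (hφ : Inv m k φ) :
    ∑ σ : Equiv.Perm (Fin (2*m)), Mf m x (k+1) σ * φ σ
      = ∑ σ : Equiv.Perm (Fin (2*m)), Mf m x k σ * φ σ := by
  have hkn : k < 2*m := by omega
  have h2 := step2 hx hkn hφ
  have hkR : (k:ℝ) < m := by exact_mod_cast hk
  have hm2 : (2:ℝ) ≤ m := by exact_mod_cast hm
  unfold Mf
  rw [Mf_sum_eq, Mf_sum_eq]
  push_cast
  rw [div_eq_div_iff (by nlinarith [hkR, hm2]) (by nlinarith [hkR, hm2])]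
  have hmu : muf m (k+1) * (2*(m:ℝ) - k) = muf m k * (2*(m:ℝ) - k - 2) + (2*(m:ℝ) - k) := by
    have h1 : (2*(m:ℝ) - 1) ≠ 0 := by nlinarith [hm2]
    unfold muf
    push_cast
    field_simp
    ring
  push_cast at hmu
  linear_combination (2*(m:ℝ) - (k:ℝ) - 1) * h2 - (2*(m:ℝ) - (k:ℝ) - 1) * (∑ σ : Equiv.Perm (Fin (2*m)), φ σ) * hmu

/-- running maximum of `|Mf|` over `1..k` -/
def Rf (m : ℕ) (x : Fin (2*m) → ℝ) : ℕ → Equiv.Perm (Fin (2*m)) → ℝ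
  | 0, _ => 0
  | (k+1), σ => max (Rf m x k σ) |Mf m x (k+1) σ|

lemma Rf_nonneg (k : ℕ) (σ : Equiv.Perm (Fin (2*m))) : 0 ≤ Rf m x k σ := by
  induction k with
  | zero => exact le_refl 0
  | succ k ih => exact le_trans ih (le_max_left _ _)

lemma Mf_le_Rf {j k : ℕ} (hj1 : 1 ≤ j) (hjk : j ≤ k) (σ : Equiv.Perm (Fin (2*m))) :
    |Mf m x j σ| ≤ Rf m x k σ := by
  induction k with
  | zero => omega
  | succ k ih =>
    rcases Nat.lt_or_ge j (k+1) with h | h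
    · exact le_trans (ih (by omega)) (le_max_left _ _)
    · have : j = k+1 := by omega
      subst this
      exact le_max_right _ _

lemma Mf_swap {j k : ℕ} (hjk : j ≤ k) {a b : Fin (2*m)} (ha : k ≤ a.val) (hb : k ≤ b.val)
    (σ : Equiv.Perm (Fin (2*m))) : Mf m x j (σ * Equiv.swap a b) = Mf m x j σ := by
  unfold Mf
  rw [S_swap (le_trans hjk ha) (le_trans hjk hb)]

lemma Rf_swap {j k : ℕ} (hjk : j ≤ k) {a b : Fin (2*m)} (ha : k ≤ a.val) (hb : k ≤ b.val)
    (σ : Equiv.Perm (Fin (2*m))) : Rf m x j (σ * Equiv.swap a b) = Rf m x j σ := by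
  induction j with
  | zero => rfl
  | succ j ih =>
    show max _ _ = max _ _
    rw [ih (by omega), Mf_swap hjk ha hb]

lemma doob_path (K : ℕ) (σ : Equiv.Perm (Fin (2*m))) :
    Rf m x K σ ^ 2
      + 2 * ∑ j ∈ Ico 1 K, Rf m x j σ * (|Mf m x (j+1) σ| - |Mf m x j σ|)
      ≤ 2 * |Mf m x K σ| * Rf m x K σ := by
  induction K with
  | zero => simp [Rf]
  | succ K ih =>
    rcases Nat.eq_zero_or_pos K with h0 | hK
    · subst h0
      have hR1 : Rf m x 1 σ = |Mf m x 1 σ| := max_eq_right (abs_nonneg _)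
      simp only [Finset.Ico_self, Finset.sum_empty, mul_zero, add_zero, hR1]
      nlinarith [abs_nonneg (Mf m x 1 σ)]
    · rw [Finset.sum_Ico_succ_top hK]
      have key : Rf m x (K+1) σ ^ 2 - Rf m x K σ ^ 2
          ≤ 2 * |Mf m x (K+1) σ| * (Rf m x (K+1) σ - Rf m x K σ) := by
      -- max cases
        rcases max_cases (Rf m x K σ) |Mf m x (K+1) σ| with ⟨h1, h2⟩ | ⟨h1, h2⟩
        · show max _ _ ^ 2 - _ ≤ 2 * _ * (max _ _ - _)
          rw [h1]; ring_nf; exact le_refl _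
        · show max _ _ ^ 2 - _ ≤ 2 * _ * (max _ _ - _)
          rw [h1]
          nlinarith [Rf_nonneg (m := m) (x := x) K σ, h2.le]
      have hRsucc : Rf m x K σ ≤ Rf m x (K+1) σ := le_max_left _ _
      nlinarith [ih, key]

lemma sign_mul_self (y : ℝ) : y * Real.sign y = |y| := by
  rcases lt_trichotomy y 0 with h | h | h
  · rw [Real.sign_of_neg h, abs_of_neg h]; ring
  · simp [h]
  · rw [Real.sign_of_pos h, abs_of_pos h]; ring

lemma abs_sign_le (y : ℝ) : |Real.sign y| ≤ 1 := by
  rcases lt_trichotomy y 0 with h | h | h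
  · rw [Real.sign_of_neg h]; simp
  · simp [h]
  · rw [Real.sign_of_pos h]; simp

lemma submart (hm : 2 ≤ m) (hx : ∀ i : Fin (2 * m), x i = if (i : ℕ) < m then 1 else -1)
    {k : ℕ} (hk : k < m) :
    0 ≤ ∑ σ : Equiv.Perm (Fin (2*m)), Rf m x k σ * (|Mf m x (k+1) σ| - |Mf m x k σ|) := by
  set φ : Equiv.Perm (Fin (2*m)) → ℝ := fun σ => Real.sign (Mf m x k σ) * Rf m x k σ with hφdef
  have hφ : Inv m k φ := by
    intro σ a b ha hb
    simp only [hφdef]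
    rw [Mf_swap le_rfl ha hb, Rf_swap le_rfl ha hb]
  have h1 := mart hm hx hk hφ
  have hpt1 : ∀ σ : Equiv.Perm (Fin (2*m)), Mf m x k σ * φ σ = |Mf m x k σ| * Rf m x k σ := by
    intro σ
    simp only [hφdef]
    rw [← mul_assoc, sign_mul_self]
  have hpt2 : ∀ σ : Equiv.Perm (Fin (2*m)),
      Mf m x (k+1) σ * φ σ ≤ |Mf m x (k+1) σ| * Rf m x k σ := by
    intro σ
    simp only [hφdef]
    rw [← mul_assoc]
    have h3 : Mf m x (k+1) σ * Real.sign (Mf m x k σ) ≤ |Mf m x (k+1) σ| := by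
      calc Mf m x (k+1) σ * Real.sign (Mf m x k σ) ≤ |Mf m x (k+1) σ * Real.sign (Mf m x k σ)| :=
            le_abs_self _
        _ = |Mf m x (k+1) σ| * |Real.sign (Mf m x k σ)| := abs_mul _ _
        _ ≤ |Mf m x (k+1) σ| * 1 :=
            mul_le_mul_of_nonneg_left (abs_sign_le _) (abs_nonneg _)
        _ = |Mf m x (k+1) σ| := mul_one _
    exact mul_le_mul_of_nonneg_right h3 (Rf_nonneg k σ)
  have h4 : ∑ σ : Equiv.Perm (Fin (2*m)), |Mf m x k σ| * Rf m x k σ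
      ≤ ∑ σ : Equiv.Perm (Fin (2*m)), |Mf m x (k+1) σ| * Rf m x k σ := by
    rw [← Finset.sum_congr rfl (fun σ _ => hpt1 σ), ← h1]
    exact Finset.sum_le_sum (fun σ _ => hpt2 σ)
  have : ∑ σ : Equiv.Perm (Fin (2*m)), Rf m x k σ * (|Mf m x (k+1) σ| - |Mf m x k σ|)
      = (∑ σ : Equiv.Perm (Fin (2*m)), |Mf m x (k+1) σ| * Rf m x k σ)
        - ∑ σ : Equiv.Perm (Fin (2*m)), |Mf m x k σ| * Rf m x k σ := by
    rw [← Finset.sum_sub_distrib]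
    exact Finset.sum_congr rfl (fun σ _ => by ring)
  rw [this]
  linarith [h4]

lemma doobL2 (hm : 2 ≤ m) (hx : ∀ i : Fin (2 * m), x i = if (i : ℕ) < m then 1 else -1) :
    ∑ σ : Equiv.Perm (Fin (2*m)), Rf m x m σ ^ 2
      ≤ 4 * ∑ σ : Equiv.Perm (Fin (2*m)), Mf m x m σ ^ 2 := by
  have h1 : ∑ σ : Equiv.Perm (Fin (2*m)), Rf m x m σ ^ 2
      ≤ 2 * ∑ σ : Equiv.Perm (Fin (2*m)), |Mf m x m σ| * Rf m x m σ := by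
    have hsum := Finset.sum_le_sum (fun σ (_ : σ ∈ (Finset.univ : Finset (Equiv.Perm (Fin (2*m))))) => doob_path (x := x) m σ)
    rw [Finset.sum_add_distrib, ← Finset.mul_sum, Finset.sum_comm] at hsum
    have hpos : 0 ≤ ∑ j ∈ Ico 1 m, ∑ σ : Equiv.Perm (Fin (2*m)),
        Rf m x j σ * (|Mf m x (j+1) σ| - |Mf m x j σ|) := by
      apply Finset.sum_nonneg
      intro j hj
      exact submart hm hx (Finset.mem_Ico.mp hj).2
    have : ∑ σ : Equiv.Perm (Fin (2*m)), 2 * |Mf m x m σ| * Rf m x m σ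
        = 2 * ∑ σ : Equiv.Perm (Fin (2*m)), |Mf m x m σ| * Rf m x m σ := by
      rw [Finset.mul_sum]
      exact Finset.sum_congr rfl (fun σ _ => by ring)
    linarith [hsum, hpos, this.symm.le, this.le]
  have hcs := Finset.sum_mul_sq_le_sq_mul_sq (Finset.univ : Finset (Equiv.Perm (Fin (2*m))))
    (fun σ => |Mf m x m σ|) (fun σ => Rf m x m σ)
  simp only [sq_abs] at hcs
  have hRnn : (0:ℝ) ≤ ∑ σ : Equiv.Perm (Fin (2*m)), Rf m x m σ ^ 2 :=
    Finset.sum_nonneg (fun σ _ => sq_nonneg _)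
  have hMnn : (0:ℝ) ≤ ∑ σ : Equiv.Perm (Fin (2*m)), Mf m x m σ ^ 2 :=
    Finset.sum_nonneg (fun σ _ => sq_nonneg _)
  nlinarith [h1, hcs, hRnn, hMnn]

lemma filter_sum_eq (σ : Equiv.Perm (Fin (2*m))) {k : ℕ} (hk : k ≤ 2*m) :
    ∑ i ∈ Finset.univ.filter (fun i : Fin (2*m) => (i:ℕ) < k), x (σ i)
      = S (2*m) x k σ := by
  have e1 : Finset.filter (fun j => j < k) (Finset.range (2*m)) = Finset.range k := by
    ext a
    simp only [Finset.mem_filter, Finset.mem_range]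
    omega
  calc ∑ i ∈ Finset.univ.filter (fun i : Fin (2*m) => (i:ℕ) < k), x (σ i)
      = ∑ i : Fin (2*m), if (i:ℕ) < k then X (2*m) x (i:ℕ) σ else 0 := by
        rw [Finset.sum_filter]
        exact Finset.sum_congr rfl (fun i _ => by rw [X_eq i.isLt])
    _ = ∑ j ∈ Finset.range (2*m), if j < k then X (2*m) x j σ else 0 :=
        Fin.sum_univ_eq_sum_range (fun j => if j < k then X (2*m) x j σ else 0) (2*m)
    _ = ∑ j ∈ Finset.range k, X (2*m) x j σ := by rw [← Finset.sum_filter, e1]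

lemma S_rev (hx : ∀ i : Fin (2 * m), x i = if (i : ℕ) < m then 1 else -1)
    {j : ℕ} (hj : j ≤ 2*m) (σ : Equiv.Perm (Fin (2*m))) :
    S (2*m) x j (σ * Fin.revPerm) = - S (2*m) x (2*m - j) σ := by
  have h1 : ∀ i, i < 2*m → X (2*m) x i (σ * Fin.revPerm) = X (2*m) x (2*m - 1 - i) σ := by
    intro i h
    rw [X_eq h, X_eq (show 2*m-1-i < 2*m by omega), Equiv.Perm.mul_apply]
    congr 2
    ext
    simp only [Fin.revPerm_apply, Fin.val_rev]
    omega
  have h2 : S (2*m) x j (σ * Fin.revPerm) = ∑ i ∈ Finset.range j, X (2*m) x (2*m-1-i) σ := by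
    unfold S
    exact Finset.sum_congr rfl (fun i hi => h1 i (by
      have := Finset.mem_range.mp hi; omega))
  have h3 : ∑ i ∈ Finset.range j, X (2*m) x (2*m-1-i) σ
      = ∑ i ∈ Ico (2*m-j) (2*m), X (2*m) x i σ := by
    apply Finset.sum_nbij' (fun i => 2*m-1-i) (fun i => 2*m-1-i)
    · intro a ha
      have := Finset.mem_range.mp ha
      simp only [Finset.mem_Ico]
      omega
    · intro a ha
      have := Finset.mem_Ico.mp ha
      simp only [Finset.mem_range]
      omega
    · intro a ha
      have := Finset.mem_range.mp ha
      omega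
    · intro a ha
      have := Finset.mem_Ico.mp ha
      omega
    · intro a ha
      rfl
  have h4 := Finset.sum_Ico_consecutive (fun i => X (2*m) x i σ)
    (Nat.zero_le (2*m-j)) (show 2*m-j ≤ 2*m by omega)
  have h5 : S (2*m) x (2*m) σ = 0 := S_top hx σ
  have h6 : S (2*m) x (2*m - j) σ = ∑ i ∈ Ico 0 (2*m-j), X (2*m) x i σ := by
    unfold S; rw [Finset.range_eq_Ico]
  have h7 : S (2*m) x (2*m) σ = ∑ i ∈ Ico 0 (2*m), X (2*m) x i σ := by
    unfold S; rw [Finset.range_eq_Ico]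
  rw [h2, h3, h6]
  rw [h7, ← h4] at h5
  linarith [h5]

lemma muf_symm {j : ℕ} (hj : j ≤ 2*m) : muf m (2*m - j) = muf m j := by
  unfold muf
  rw [Nat.cast_sub hj]
  push_cast
  ring

/-- the quantity inside the max -/
def Gf (m : ℕ) (x : Fin (2*m) → ℝ) (k : ℕ) (σ : Equiv.Perm (Fin (2*m))) : ℝ :=
  |S (2*m) x k σ ^ 2 - muf m k| ^ 2

lemma Gf_rev (hx : ∀ i : Fin (2 * m), x i = if (i : ℕ) < m then 1 else -1)
    {j : ℕ} (hj : j ≤ 2*m) (σ : Equiv.Perm (Fin (2*m))) :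
    Gf m x j (σ * Fin.revPerm) = Gf m x (2*m - j) σ := by
  unfold Gf
  rw [S_rev hx hj, muf_symm hj, neg_sq]

lemma sup_second_half (hm : 2 ≤ m)
    (hx : ∀ i : Fin (2 * m), x i = if (i : ℕ) < m then 1 else -1)
    (σ : Equiv.Perm (Fin (2*m))) :
    (Finset.Icc m (2*m-1)).sup' (Finset.nonempty_Icc.mpr (by omega)) (fun k => Gf m x k σ)
      = (Finset.Icc 1 m).sup' (Finset.nonempty_Icc.mpr (by omega))
          (fun j => Gf m x j (σ * Fin.revPerm)) := by
  apply le_antisymm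
  · apply Finset.sup'_le
    intro k hk
    obtain ⟨hk1, hk2⟩ := Finset.mem_Icc.mp hk
    have e : 2*m - (2*m - k) = k := by omega
    have : Gf m x k σ = Gf m x (2*m - k) (σ * Fin.revPerm) := by
      rw [Gf_rev hx (show 2*m - k ≤ 2*m by omega), e]
    rw [this]
    have hmem : 2*m - k ∈ Finset.Icc 1 m := by
      rw [Finset.mem_Icc]; omega
    exact Finset.le_sup' (fun j => Gf m x j (σ * Fin.revPerm)) hmem
  · apply Finset.sup'_le
    intro j hj
    obtain ⟨hj1, hj2⟩ := Finset.mem_Icc.mp hj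
    rw [Gf_rev hx (by omega : j ≤ 2*m)]
    have hmem : 2*m - j ∈ Finset.Icc m (2*m-1) := by
      rw [Finset.mem_Icc]; omega
    exact Finset.le_sup' (fun k => Gf m x k σ) hmem

lemma sum_sup_second (hm : 2 ≤ m)
    (hx : ∀ i : Fin (2 * m), x i = if (i : ℕ) < m then 1 else -1) :
    ∑ σ : Equiv.Perm (Fin (2*m)),
        (Finset.Icc m (2*m-1)).sup' (Finset.nonempty_Icc.mpr (by omega)) (fun k => Gf m x k σ)
      = ∑ σ : Equiv.Perm (Fin (2*m)),
        (Finset.Icc 1 m).sup' (Finset.nonempty_Icc.mpr (by omega)) (fun k => Gf m x k σ) := by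
  rw [Finset.sum_congr rfl (fun σ _ => sup_second_half hm hx σ)]
  exact Equiv.sum_comp (Equiv.mulRight (Fin.revPerm)) (fun τ =>
    (Finset.Icc 1 m).sup' (Finset.nonempty_Icc.mpr (by omega)) (fun k => Gf m x k τ))

lemma Gf_eq_Mf (hm : 2 ≤ m) {k : ℕ} (hk : k ≤ m) (σ : Equiv.Perm (Fin (2*m))) :
    Gf m x k σ = Mf m x k σ ^ 2 * ((2*(m:ℝ) - k) * (2*(m:ℝ) - k - 1)) ^ 2 := by
  have hkR : (k:ℝ) ≤ m := by exact_mod_cast hk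
  have hm2 : (2:ℝ) ≤ m := by exact_mod_cast hm
  have hd : (2*(m:ℝ) - k) * (2*(m:ℝ) - k - 1) ≠ 0 := by nlinarith [hkR, hm2]
  unfold Gf Mf
  rw [sq_abs, div_pow, div_mul_cancel₀]
  exact pow_ne_zero 2 hd

lemma Gf_le (hm : 2 ≤ m) {k : ℕ} (hk1 : 1 ≤ k) (hk : k ≤ m) (σ : Equiv.Perm (Fin (2*m))) :
    Gf m x k σ ≤ ((2*(m:ℝ)-1)*(2*(m:ℝ)-2))^2 * Rf m x m σ ^ 2 := by
  have hkR : (k:ℝ) ≤ m := by exact_mod_cast hk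
  have hk1R : (1:ℝ) ≤ k := by exact_mod_cast hk1
  have hm2 : (2:ℝ) ≤ m := by exact_mod_cast hm
  rw [Gf_eq_Mf hm hk σ]
  have h1 : |Mf m x k σ| ≤ Rf m x m σ := Mf_le_Rf hk1 hk σ
  have h2 : Mf m x k σ ^ 2 ≤ Rf m x m σ ^ 2 := by
    rw [← sq_abs]
    exact pow_le_pow_left₀ (abs_nonneg _) h1 2
  have h3 : ((2*(m:ℝ) - k) * (2*(m:ℝ) - k - 1)) ^ 2 ≤ ((2*(m:ℝ)-1)*(2*(m:ℝ)-2))^2 := by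
    apply pow_le_pow_left₀
    · nlinarith [hkR, hm2, hk1R]
    · nlinarith [hkR, hm2, hk1R]
  calc Mf m x k σ ^ 2 * ((2*(m:ℝ) - k) * (2*(m:ℝ) - k - 1)) ^ 2
      ≤ Rf m x m σ ^ 2 * ((2*(m:ℝ)-1)*(2*(m:ℝ)-2))^2 := by
        apply mul_le_mul h2 h3 (sq_nonneg _) (sq_nonneg _)
    _ = ((2*(m:ℝ)-1)*(2*(m:ℝ)-2))^2 * Rf m x m σ ^ 2 := by ring

lemma sum_Mm_sq (hm : 2 ≤ m)
    (hx : ∀ i : Fin (2 * m), x i = if (i : ℕ) < m then 1 else -1) :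
    ∑ σ : Equiv.Perm (Fin (2*m)), Mf m x m σ ^ 2
      = (Nat.factorial (2*m) : ℝ) * (alf m m - muf m m ^ 2) / ((m:ℝ) * ((m:ℝ)-1))^2 := by
  have hd : ∀ σ : Equiv.Perm (Fin (2*m)), Mf m x m σ ^2
      = (S (2*m) x m σ^2 - muf m m)^2 / ((m:ℝ)*((m:ℝ)-1))^2 := by
    intro σ
    unfold Mf
    rw [div_pow]
    congr 2
    ring
  rw [Finset.sum_congr rfl (fun σ _ => hd σ), ← Finset.sum_div]
  congr 1
  have expand : ∀ σ : Equiv.Perm (Fin (2*m)), (S (2*m) x m σ^2 - muf m m)^2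
      = S (2*m) x m σ^4 - 2 * muf m m * S (2*m) x m σ^2 + muf m m ^2 * 1 := by
    intro σ; ring
  rw [Finset.sum_congr rfl (fun σ _ => expand σ), Finset.sum_add_distrib,
    Finset.sum_sub_distrib, ← Finset.mul_sum, ← Finset.mul_sum,
    A_closed hm hx le_rfl, B_closed hm hx le_rfl, sum_one]
  ring

lemma keyineq (hm : 2 ≤ m) :
    alf m m - muf m m ^ 2 ≤ 4*(m:ℝ)^4/(2*(m:ℝ)-1)^2 := by
  set y : ℝ := (m:ℝ) with hy'
  have hy : 2 ≤ y := by rw [hy']; exact_mod_cast hm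
  have h1 : (0:ℝ) < 2*y-1 := by linarith
  have h3 : (0:ℝ) < 2*y-3 := by linarith
  have hcast : alf m m - muf m m ^2 = y + 3*y*(y-1) - (4*y*(y-1)+6*y*(y-1)*(y-2))/(2*y-1)
      + 3*y*(y-1)*(y-2)*(y-3)/((2*y-1)*(2*y-3)) - (y*(2*y-y)/(2*y-1))^2 := by
    unfold alf muf; ring
  rw [hcast]
  have key : 4*y^4/(2*y-1)^2 - (y + 3*y*(y-1) - (4*y*(y-1)+6*y*(y-1)*(y-2))/(2*y-1)
      + 3*y*(y-1)*(y-2)*(y-3)/((2*y-1)*(2*y-3))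
      - (y*(2*y-y)/(2*y-1))^2) = 4*y^3*(y^2-y-1)/((2*y-1)^2*(2*y-3)) := by
    have h1' : y*2-1 ≠ 0 := by linarith
    have h3' : y*2-3 ≠ 0 := by linarith
    field_simp
    ring
  have hy0 : (0:ℝ) < y := by linarith
  have hf : (0:ℝ) ≤ y^2 - y - 1 := by nlinarith
  have hnum : (0:ℝ) ≤ 4*y^3*(y^2-y-1) := by
    nlinarith [mul_nonneg (le_of_lt (pow_pos hy0 3)) hf]
  have hq := div_nonneg hnum (le_of_lt (mul_pos (pow_pos h1 2) h3))
  linarith [key, hq]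

lemma Gf_nonneg (k : ℕ) (σ : Equiv.Perm (Fin (2*m))) : 0 ≤ Gf m x k σ := by
  unfold Gf; positivity

lemma main_bound (hm : 2 ≤ m)
    (hx : ∀ i : Fin (2 * m), x i = if (i : ℕ) < m then 1 else -1) :
    ∑ σ : Equiv.Perm (Fin (2*m)),
        (Finset.Icc 1 (2*m-1)).sup' (Finset.nonempty_Icc.mpr (by omega)) (fun k => Gf m x k σ)
      ≤ 128 * (m:ℝ)^2 * (Nat.factorial (2*m) : ℝ) := by
  have hm2 : (2:ℝ) ≤ m := by exact_mod_cast hm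
  set Nf : ℝ := (Nat.factorial (2*m) : ℝ) with hNfdef
  set D2 : ℝ := ((2*(m:ℝ)-1)*(2*(m:ℝ)-2))^2 with hD2def
  have hsplit : ∀ σ : Equiv.Perm (Fin (2*m)),
      (Finset.Icc 1 (2*m-1)).sup' (Finset.nonempty_Icc.mpr (by omega)) (fun k => Gf m x k σ)
        ≤ (Finset.Icc 1 m).sup' (Finset.nonempty_Icc.mpr (by omega)) (fun k => Gf m x k σ)
          + (Finset.Icc m (2*m-1)).sup' (Finset.nonempty_Icc.mpr (by omega))
              (fun k => Gf m x k σ) := by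
    intro σ
    apply Finset.sup'_le
    intro k hk
    obtain ⟨hk1, hk2⟩ := Finset.mem_Icc.mp hk
    rcases le_or_gt k m with h | h
    · have h1 := Finset.le_sup' (fun j => Gf m x j σ)
        (Finset.mem_Icc.mpr ⟨hk1, h⟩ : k ∈ Finset.Icc 1 m)
      have h2 := le_trans (Gf_nonneg m σ) (Finset.le_sup' (fun j => Gf m x j σ)
        (Finset.mem_Icc.mpr ⟨le_rfl, by omega⟩ : m ∈ Finset.Icc m (2*m-1)))
      linarith
    · have h1 := Finset.le_sup' (fun j => Gf m x j σ)
        (Finset.mem_Icc.mpr ⟨by omega, hk2⟩ : k ∈ Finset.Icc m (2*m-1))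
      have h2 := le_trans (Gf_nonneg 1 σ) (Finset.le_sup' (fun j => Gf m x j σ)
        (Finset.mem_Icc.mpr ⟨le_rfl, by omega⟩ : 1 ∈ Finset.Icc 1 m))
      linarith
  have hfirst : ∀ σ : Equiv.Perm (Fin (2*m)),
      (Finset.Icc 1 m).sup' (Finset.nonempty_Icc.mpr (by omega)) (fun k => Gf m x k σ)
        ≤ D2 * Rf m x m σ ^ 2 := by
    intro σ
    apply Finset.sup'_le
    intro k hk
    obtain ⟨hk1, hk2⟩ := Finset.mem_Icc.mp hk
    exact Gf_le hm hk1 hk2 σ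
  calc ∑ σ : Equiv.Perm (Fin (2*m)),
      (Finset.Icc 1 (2*m-1)).sup' (Finset.nonempty_Icc.mpr (by omega)) (fun k => Gf m x k σ)
      ≤ ∑ σ : Equiv.Perm (Fin (2*m)),
          ((Finset.Icc 1 m).sup' (Finset.nonempty_Icc.mpr (by omega)) (fun k => Gf m x k σ)
            + (Finset.Icc m (2*m-1)).sup' (Finset.nonempty_Icc.mpr (by omega))
                (fun k => Gf m x k σ)) := Finset.sum_le_sum (fun σ _ => hsplit σ)
    _ = 2 * ∑ σ : Equiv.Perm (Fin (2*m)),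
          (Finset.Icc 1 m).sup' (Finset.nonempty_Icc.mpr (by omega)) (fun k => Gf m x k σ) := by
        rw [Finset.sum_add_distrib, sum_sup_second hm hx]
        ring
    _ ≤ 2 * (D2 * ∑ σ : Equiv.Perm (Fin (2*m)), Rf m x m σ ^ 2) := by
        have := Finset.sum_le_sum (fun σ (_ : σ ∈ (Finset.univ : Finset (Equiv.Perm (Fin (2*m))))) => hfirst σ)
        rw [← Finset.mul_sum] at this
        linarith
    _ ≤ 2 * (D2 * (4 * ∑ σ : Equiv.Perm (Fin (2*m)), Mf m x m σ ^ 2)) := by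
        have hr := doobL2 hm hx
        have hD2nn : 0 ≤ D2 := sq_nonneg _
        nlinarith [mul_le_mul_of_nonneg_left hr hD2nn]
    _ = (8 * D2 * Nf / ((m:ℝ) * ((m:ℝ)-1))^2) * (alf m m - muf m m ^ 2) := by
        rw [sum_Mm_sq hm hx]
        ring
    _ ≤ (8 * D2 * Nf / ((m:ℝ) * ((m:ℝ)-1))^2) * (4*(m:ℝ)^4/(2*(m:ℝ)-1)^2) := by
        apply mul_le_mul_of_nonneg_left (keyineq hm)
        apply div_nonneg
        · have : (0:ℝ) ≤ Nf := by positivity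
          nlinarith [sq_nonneg ((2*(m:ℝ)-1)*(2*(m:ℝ)-2)), this]
        · exact sq_nonneg _
    _ = 128 * (m:ℝ)^2 * Nf := by
        rw [hD2def]
        have h0 : (m:ℝ) ≠ 0 := by nlinarith
        have h1 : (m:ℝ) - 1 ≠ 0 := by nlinarith
        have h2 : 2*(m:ℝ) - 1 ≠ 0 := by nlinarith
        field_simp
        ring
end Aux14

theorem statement14 (m : ℕ) (hm : 1 ≤ m)
    (x : Fin (2 * m) → ℝ) (hx : ∀ i : Fin (2 * m), x i = if (i : ℕ) < m then 1 else -1) :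
    (1 / (Nat.factorial (2 * m) : ℝ)) * ∑ σ : Equiv.Perm (Fin (2 * m)),
        (Finset.Icc 1 (2 * m - 1)).sup'
          (Finset.nonempty_Icc.mpr (by omega))
          (fun k =>
            |(∑ i ∈ Finset.univ.filter fun i : Fin (2 * m) => (i : ℕ) < k, x (σ i)) ^ 2
              - (k : ℝ) * (2 * (m : ℝ) - k) / (2 * (m : ℝ) - 1)| ^ 2)
      ≤ 128 * (m : ℝ) ^ 2 := by
  have hconv : ∀ σ : Equiv.Perm (Fin (2*m)),
      (Finset.Icc 1 (2 * m - 1)).sup'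
          (Finset.nonempty_Icc.mpr (by omega))
          (fun k =>
            |(∑ i ∈ Finset.univ.filter fun i : Fin (2 * m) => (i : ℕ) < k, x (σ i)) ^ 2
              - (k : ℝ) * (2 * (m : ℝ) - k) / (2 * (m : ℝ) - 1)| ^ 2)
        = (Finset.Icc 1 (2 * m - 1)).sup' (Finset.nonempty_Icc.mpr (by omega))
            (fun k => Aux14.Gf m x k σ) := by
    intro σ
    refine Finset.sup'_congr _ rfl (fun k hk => ?_)
    obtain ⟨hk1, hk2⟩ := Finset.mem_Icc.mp hk
    rw [Aux14.filter_sum_eq σ (by omega : k ≤ 2*m)]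
    rfl
  rw [Finset.sum_congr rfl (fun σ _ => hconv σ)]
  have hNf : (0:ℝ) < (Nat.factorial (2*m) : ℝ) := by
    exact_mod_cast (2*m).factorial_pos
  rcases eq_or_lt_of_le hm with h1 | h2
  · -- m = 1
    subst h1
    have hz : ∀ σ : Equiv.Perm (Fin (2*1)),
        (Finset.Icc 1 (2 * 1 - 1)).sup' (Finset.nonempty_Icc.mpr (by omega))
            (fun k => Aux14.Gf 1 x k σ) ≤ 0 := by
      intro σ
      apply Finset.sup'_le
      intro k hk
      have hk1 : k = 1 := by have := Finset.mem_Icc.mp hk; omega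
      subst hk1
      have hS : S (2*1) x 1 σ = x (σ ⟨0, by omega⟩) := by
        unfold S
        rw [Finset.sum_range_one]
        exact Aux14.X_eq (by omega) σ
      unfold Aux14.Gf Aux14.muf
      rw [hS, hx (σ ⟨0, by omega⟩)]
      split_ifs <;> norm_num
    have hsum : ∑ σ : Equiv.Perm (Fin (2*1)),
        (Finset.Icc 1 (2 * 1 - 1)).sup' (Finset.nonempty_Icc.mpr (by omega))
            (fun k => Aux14.Gf 1 x k σ) ≤ 0 := by
      refine le_trans (Finset.sum_le_sum (fun σ _ => hz σ)) (by simp)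
    calc (1 / (Nat.factorial (2 * 1) : ℝ)) * ∑ σ : Equiv.Perm (Fin (2 * 1)),
          (Finset.Icc 1 (2 * 1 - 1)).sup' (Finset.nonempty_Icc.mpr (by omega))
            (fun k => Aux14.Gf 1 x k σ)
        ≤ (1 / (Nat.factorial (2 * 1) : ℝ)) * 0 := by
          apply mul_le_mul_of_nonneg_left hsum
          positivity
      _ ≤ 128 * ((1:ℕ) : ℝ) ^ 2 := by norm_num
  · have hm2 : 2 ≤ m := h2
    have hb := Aux14.main_bound hm2 hx
    calc (1 / (Nat.factorial (2 * m) : ℝ)) * ∑ σ : Equiv.Perm (Fin (2 * m)),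
          (Finset.Icc 1 (2 * m - 1)).sup' (Finset.nonempty_Icc.mpr (by omega))
            (fun k => Aux14.Gf m x k σ)
        ≤ (1 / (Nat.factorial (2 * m) : ℝ)) * (128 * (m:ℝ)^2 * (Nat.factorial (2*m) : ℝ)) := by
          apply mul_le_mul_of_nonneg_left hb
          positivity
      _ = 128 * (m : ℝ) ^ 2 := by
          field_simp

end
end

section
/- For a uniformly random ordering X_1,...,X_{2m} of m copies of +1 and m copies of -1, with S_k = X_1+...+X_k, one has E[S_m^2] = m^2/(2m-1) and E[S_m^4] = (3m^4 - 4m^3)/(4m^2 - 8m + 3), provided m >= 2. -/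
open MeasureTheory Finset

noncomputable section

lemma integral_perm (n : ℕ) (f : Equiv.Perm (Fin n) → ℝ) :
    ∫ σ, f σ ∂(permMeasure n)
      = (∑ σ : Equiv.Perm (Fin n), f σ) / (Fintype.card (Equiv.Perm (Fin n)) : ℝ) := by
  rw [permMeasure, integral_fintype .of_finite]
  have : ∀ σ : Equiv.Perm (Fin n),
      ((PMF.uniformOfFintype (Equiv.Perm (Fin n))).toMeasure {σ}).toReal
        = (Fintype.card (Equiv.Perm (Fin n)) : ℝ)⁻¹ := by
    intro σ
    rw [PMF.toMeasure_apply_singleton _ _ (measurableSet_singleton σ),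
      PMF.uniformOfFintype_apply]
    simp
  simp only [measureReal_def, this, smul_eq_mul]
  rw [← Finset.mul_sum, inv_mul_eq_div]

lemma sym_perm (n k : ℕ) (x : Fin n → ℝ) (u v : Fin k → Fin n)
    (hu : Function.Injective u) (hv : Function.Injective v) :
    ∑ σ : Equiv.Perm (Fin n), ∏ t, x (σ (u t))
      = ∑ σ : Equiv.Perm (Fin n), ∏ t, x (σ (v t)) := by
  classical
  let e : {a // a ∈ Set.range u} ≃ {a // a ∈ Set.range v} :=
    (Equiv.ofInjective u hu).symm.trans (Equiv.ofInjective v hv)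
  let τ : Equiv.Perm (Fin n) := e.extendSubtype
  have hτ : ∀ t, τ (u t) = v t := by
    intro t
    have h1 : u t ∈ Set.range u := ⟨t, rfl⟩
    rw [Equiv.extendSubtype_apply_of_mem e (u t) h1]
    show ((Equiv.ofInjective v hv) ((Equiv.ofInjective u hu).symm ⟨u t, h1⟩) : Fin n) = v t
    have : (Equiv.ofInjective u hu).symm ⟨u t, h1⟩ = t := by
      apply (Equiv.ofInjective u hu).injective
      simp [Equiv.apply_symm_apply]
    rw [this]
    rfl
  have := Fintype.sum_bijective (fun σ : Equiv.Perm (Fin n) => σ * τ)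
    (Group.mulRight_bijective τ)
    (fun σ => ∏ t, x (σ (τ (u t)))) (fun σ => ∏ t, x (σ (u t))) (fun σ => rfl)
  calc ∑ σ : Equiv.Perm (Fin n), ∏ t, x (σ (u t))
      = ∑ σ : Equiv.Perm (Fin n), ∏ t, x (σ (τ (u t))) := this.symm
    _ = ∑ σ : Equiv.Perm (Fin n), ∏ t, x (σ (v t)) := by
        simp only [hτ]

lemma inj2 {α : Type*} (a b : α) (h : a ≠ b) : Function.Injective ![a, b] := by
  intro s t hst
  fin_cases s <;> fin_cases t <;> simp_all

lemma inj4 {α : Type*} (a b c d : α) (hab : a ≠ b) (hac : a ≠ c) (had : a ≠ d)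
    (hbc : b ≠ c) (hbd : b ≠ d) (hcd : c ≠ d) : Function.Injective ![a, b, c, d] := by
  intro s t hst
  fin_cases s <;> fin_cases t <;> simp_all

section main

variable {m : ℕ} {x : Fin (2 * m) → ℝ}

lemma sqX (hx : ∀ i : Fin (2 * m), x i = if (i : ℕ) < m then 1 else -1) (i : ℕ) (hi : i < 2 * m) (σ : Equiv.Perm (Fin (2 * m))) :
    X (2 * m) x i σ * X (2 * m) x i σ = 1 := by
  rw [X, dif_pos hi, hx]
  split_ifs <;> norm_num

lemma totX (hx : ∀ i : Fin (2 * m), x i = if (i : ℕ) < m then 1 else -1) (σ : Equiv.Perm (Fin (2 * m))) :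
    ∑ i ∈ Finset.range (2 * m), X (2 * m) x i σ = 0 := by
  rw [← Fin.sum_univ_eq_sum_range (fun i => X (2 * m) x i σ)]
  have h1 : ∀ a : Fin (2 * m), X (2 * m) x a σ = x (σ a) := by
    intro a; rw [X, dif_pos a.isLt]
  simp only [h1]
  rw [Equiv.sum_comp σ x]
  simp only [hx]
  rw [Fin.sum_univ_eq_sum_range (fun i => if i < m then (1 : ℝ) else -1)]
  rw [← Finset.sum_range_add_sum_Ico _ (by omega : m ≤ 2 * m)]
  rw [Finset.sum_congr rfl (fun i hi => if_pos (Finset.mem_range.mp hi)),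
    Finset.sum_congr rfl (fun i hi => if_neg (by
      have := (Finset.mem_Ico.mp hi).1; omega)),
    Finset.sum_const, Finset.sum_const]
  simp only [Nat.card_Ico, Finset.card_range, nsmul_eq_mul]
  have h2 : 2 * m - m = m := by omega
  rw [h2]
  ring

lemma pairX (hm : 2 ≤ m) (i j : ℕ) (hi : i < 2 * m) (hj : j < 2 * m) (hij : i ≠ j) :
    ∑ σ : Equiv.Perm (Fin (2 * m)), X (2 * m) x i σ * X (2 * m) x j σ
      = ∑ σ : Equiv.Perm (Fin (2 * m)), X (2 * m) x 0 σ * X (2 * m) x 1 σ := by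
  have h0 : (0 : ℕ) < 2 * m := by omega
  have h1 : (1 : ℕ) < 2 * m := by omega
  have key := sym_perm (2 * m) 2 x ![⟨i, hi⟩, ⟨j, hj⟩] ![⟨0, h0⟩, ⟨1, h1⟩]
    (inj2 _ _ (by simp [Fin.ext_iff, hij])) (inj2 _ _ (by simp [Fin.ext_iff]))
  simpa only [Fin.prod_univ_two, Matrix.cons_val_zero, Matrix.cons_val_one, Matrix.head_cons,
    X, dif_pos hi, dif_pos hj, dif_pos h0, dif_pos h1] using key

lemma quadX (hm : 2 ≤ m) (i j k l : ℕ) (hi : i < 2 * m) (hj : j < 2 * m) (hk : k < 2 * m) (hl : l < 2 * m)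
    (hij : i ≠ j) (hik : i ≠ k) (hil : i ≠ l) (hjk : j ≠ k) (hjl : j ≠ l) (hkl : k ≠ l) :
    ∑ σ : Equiv.Perm (Fin (2 * m)),
        X (2 * m) x i σ * X (2 * m) x j σ * (X (2 * m) x k σ * X (2 * m) x l σ)
      = ∑ σ : Equiv.Perm (Fin (2 * m)),
        X (2 * m) x 0 σ * X (2 * m) x 1 σ * (X (2 * m) x 2 σ * X (2 * m) x 3 σ) := by
  have h0 : (0 : ℕ) < 2 * m := by omega
  have h1 : (1 : ℕ) < 2 * m := by omega
  have h2 : (2 : ℕ) < 2 * m := by omega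
  have h3 : (3 : ℕ) < 2 * m := by omega
  have hm4 : 4 ≤ 2 * m := by omega
  have key := sym_perm (2 * m) 4 x ![⟨i, hi⟩, ⟨j, hj⟩, ⟨k, hk⟩, ⟨l, hl⟩]
    ![⟨0, h0⟩, ⟨1, h1⟩, ⟨2, h2⟩, ⟨3, h3⟩]
    (inj4 _ _ _ _ (by simp [Fin.ext_iff, hij]) (by simp [Fin.ext_iff, hik])
      (by simp [Fin.ext_iff, hil]) (by simp [Fin.ext_iff, hjk])
      (by simp [Fin.ext_iff, hjl]) (by simp [Fin.ext_iff, hkl]))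
    (inj4 _ _ _ _ (by simp [Fin.ext_iff]) (by simp [Fin.ext_iff]) (by simp [Fin.ext_iff])
      (by simp [Fin.ext_iff]) (by simp [Fin.ext_iff]) (by simp [Fin.ext_iff]))
  simp only [Fin.prod_univ_four, Matrix.cons_val_zero, Matrix.cons_val_one, Matrix.head_cons,
    Matrix.cons_val_two, Matrix.cons_val_three, Matrix.tail_cons] at key
  simp only [X, dif_pos hi, dif_pos hj, dif_pos hk, dif_pos hl,
    dif_pos h0, dif_pos h1, dif_pos h2, dif_pos h3]
  calc _ = ∑ σ : Equiv.Perm (Fin (2*m)),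
        x (σ ⟨i, hi⟩) * x (σ ⟨j, hj⟩) * x (σ ⟨k, hk⟩) * x (σ ⟨l, hl⟩) := by
        apply Finset.sum_congr rfl; intros; ring
    _ = ∑ σ : Equiv.Perm (Fin (2*m)),
        x (σ ⟨0, h0⟩) * x (σ ⟨1, h1⟩) * x (σ ⟨2, h2⟩) * x (σ ⟨3, h3⟩) := key
    _ = _ := by apply Finset.sum_congr rfl; intros; ring


def NN (m : ℕ) : ℝ := (Fintype.card (Equiv.Perm (Fin (2 * m))) : ℝ)

def C2 (m : ℕ) (x : Fin (2 * m) → ℝ) : ℝ :=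
  ∑ σ : Equiv.Perm (Fin (2 * m)), X (2 * m) x 0 σ * X (2 * m) x 1 σ

def C4 (m : ℕ) (x : Fin (2 * m) → ℝ) : ℝ :=
  ∑ σ : Equiv.Perm (Fin (2 * m)),
    X (2 * m) x 0 σ * X (2 * m) x 1 σ * (X (2 * m) x 2 σ * X (2 * m) x 3 σ)

lemma sumXX (hx : ∀ i : Fin (2 * m), x i = if (i : ℕ) < m then 1 else -1)
    (i : ℕ) (hi : i < 2 * m) :
    ∑ σ : Equiv.Perm (Fin (2 * m)), X (2 * m) x i σ * X (2 * m) x i σ = NN m := by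
  rw [Finset.sum_congr rfl (fun σ _ => sqX hx i hi σ), Finset.sum_const, Finset.card_univ,
    nsmul_eq_mul, mul_one, NN]

lemma c2_eq (hm : 2 ≤ m) (hx : ∀ i : Fin (2 * m), x i = if (i : ℕ) < m then 1 else -1) :
    (2 * (m : ℝ) - 1) * C2 m x = -(NN m) := by
  have h0m : (0 : ℕ) ∈ Finset.range (2 * m) := by simp; omega
  have key : ∑ j ∈ (Finset.range (2 * m)).erase 0,
      (∑ σ : Equiv.Perm (Fin (2 * m)), X (2 * m) x 0 σ * X (2 * m) x j σ) = -(NN m) := by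
    rw [Finset.sum_comm]
    have hσ : ∀ σ : Equiv.Perm (Fin (2 * m)),
        ∑ j ∈ (Finset.range (2 * m)).erase 0, X (2 * m) x 0 σ * X (2 * m) x j σ = -1 := by
      intro σ
      rw [← Finset.mul_sum, Finset.sum_erase_eq_sub h0m, totX hx σ]
      have h := sqX hx 0 (by omega) σ
      linear_combination -h
    rw [Finset.sum_congr rfl (fun σ _ => hσ σ), Finset.sum_const, Finset.card_univ,
      nsmul_eq_mul, NN]
    ring
  have each : ∀ j ∈ (Finset.range (2 * m)).erase 0,
      (∑ σ : Equiv.Perm (Fin (2 * m)), X (2 * m) x 0 σ * X (2 * m) x j σ) = C2 m x := by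
    intro j hj
    have hj' := Finset.mem_erase.mp hj
    exact pairX hm 0 j (by omega) (Finset.mem_range.mp hj'.2) (Ne.symm hj'.1)
  rw [Finset.sum_congr rfl each, Finset.sum_const, Finset.card_erase_of_mem h0m,
    Finset.card_range, nsmul_eq_mul] at key
  have hcast : ((2 * m - 1 : ℕ) : ℝ) = 2 * (m : ℝ) - 1 := by
    push_cast [Nat.cast_sub (by omega : 1 ≤ 2 * m)]; ring
  rw [hcast] at key
  exact key

lemma c4_eq (hm : 2 ≤ m) (hx : ∀ i : Fin (2 * m), x i = if (i : ℕ) < m then 1 else -1) :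
    (2 * (m : ℝ) - 3) * C4 m x = -3 * C2 m x := by
  set s : Finset ℕ := (((Finset.range (2 * m)).erase 0).erase 1).erase 2 with hs
  have h0m : (0 : ℕ) ∈ Finset.range (2 * m) := by simp; omega
  have h1m : (1 : ℕ) ∈ (Finset.range (2 * m)).erase 0 := by
    simp [Finset.mem_erase]; omega
  have h2m : (2 : ℕ) ∈ ((Finset.range (2 * m)).erase 0).erase 1 := by
    simp [Finset.mem_erase]; omega
  have key : ∑ l ∈ s, (∑ σ : Equiv.Perm (Fin (2 * m)),
      X (2 * m) x 0 σ * X (2 * m) x 1 σ * (X (2 * m) x 2 σ * X (2 * m) x l σ))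
      = -3 * C2 m x := by
    rw [Finset.sum_comm]
    have hσ : ∀ σ : Equiv.Perm (Fin (2 * m)),
        ∑ l ∈ s, X (2 * m) x 0 σ * X (2 * m) x 1 σ * (X (2 * m) x 2 σ * X (2 * m) x l σ)
        = -(X (2 * m) x 1 σ * X (2 * m) x 2 σ) - X (2 * m) x 0 σ * X (2 * m) x 2 σ
          - X (2 * m) x 0 σ * X (2 * m) x 1 σ := by
      intro σ
      have hterm : ∀ l, X (2 * m) x 0 σ * X (2 * m) x 1 σ * (X (2 * m) x 2 σ * X (2 * m) x l σ)
          = X (2 * m) x 0 σ * X (2 * m) x 1 σ * X (2 * m) x 2 σ * X (2 * m) x l σ := by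
        intro l; ring
      rw [Finset.sum_congr rfl (fun l _ => hterm l), ← Finset.mul_sum, hs,
        Finset.sum_erase_eq_sub h2m, Finset.sum_erase_eq_sub h1m,
        Finset.sum_erase_eq_sub h0m, totX hx σ]
      have h0 := sqX hx 0 (by omega) σ
      have h1 := sqX hx 1 (by omega) σ
      have h2 := sqX hx 2 (by omega) σ
      linear_combination (-(X (2*m) x 1 σ * X (2*m) x 2 σ)) * h0
        - (X (2*m) x 0 σ * X (2*m) x 2 σ) * h1 - (X (2*m) x 0 σ * X (2*m) x 1 σ) * h2
    rw [Finset.sum_congr rfl (fun σ _ => hσ σ)]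
    rw [Finset.sum_sub_distrib, Finset.sum_sub_distrib, Finset.sum_neg_distrib]
    rw [pairX hm 1 2 (by omega) (by omega) (by omega),
      pairX hm 0 2 (by omega) (by omega) (by omega)]
    show -(C2 m x) - C2 m x - C2 m x = -3 * C2 m x
    ring
  have each : ∀ l ∈ s, (∑ σ : Equiv.Perm (Fin (2 * m)),
      X (2 * m) x 0 σ * X (2 * m) x 1 σ * (X (2 * m) x 2 σ * X (2 * m) x l σ)) = C4 m x := by
    intro l hl
    rw [hs] at hl
    have hl2 := Finset.mem_erase.mp hl
    have hl1 := Finset.mem_erase.mp hl2.2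
    have hl0 := Finset.mem_erase.mp hl1.2
    have hlm := Finset.mem_range.mp hl0.2
    exact quadX hm 0 1 2 l (by omega) (by omega) (by omega) hlm
      (by omega) (by omega) (Ne.symm hl0.1) (by omega) (Ne.symm hl1.1) (Ne.symm hl2.1)
  rw [Finset.sum_congr rfl each, Finset.sum_const, hs] at key
  rw [Finset.card_erase_of_mem h2m, Finset.card_erase_of_mem h1m,
    Finset.card_erase_of_mem h0m, Finset.card_range, nsmul_eq_mul] at key
  have hcast : ((2 * m - 1 - 1 - 1 : ℕ) : ℝ) = 2 * (m : ℝ) - 3 := by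
    have : 2 * m - 1 - 1 - 1 = 2 * m - 3 := by omega
    rw [this, Nat.cast_sub (by omega : 3 ≤ 2 * m)]; push_cast; ring
  rw [hcast] at key
  exact key


def W (m : ℕ) (x : Fin (2 * m) → ℝ) (i j k l : ℕ) : ℝ :=
  ∑ σ : Equiv.Perm (Fin (2 * m)),
    X (2 * m) x i σ * X (2 * m) x j σ * (X (2 * m) x k σ * X (2 * m) x l σ)

variable (hm : 2 ≤ m) (hx : ∀ i : Fin (2 * m), x i = if (i : ℕ) < m then 1 else -1)

include hx in
lemma W_N1 (a b : ℕ) (ha : a < 2 * m) (hb : b < 2 * m) : W m x a b a b = NN m := by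
  have h : ∀ σ : Equiv.Perm (Fin (2 * m)),
      X (2*m) x a σ * X (2*m) x b σ * (X (2*m) x a σ * X (2*m) x b σ) = 1 := fun σ => by
    linear_combination (X (2*m) x b σ * X (2*m) x b σ) * sqX hx a ha σ + sqX hx b hb σ
  rw [W, Finset.sum_congr rfl (fun σ _ => h σ), Finset.sum_const, Finset.card_univ,
    nsmul_eq_mul, mul_one, NN]

include hx in
lemma W_N2 (a b : ℕ) (ha : a < 2 * m) (hb : b < 2 * m) : W m x a b b a = NN m := by
  have h : ∀ σ : Equiv.Perm (Fin (2 * m)),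
      X (2*m) x a σ * X (2*m) x b σ * (X (2*m) x b σ * X (2*m) x a σ) = 1 := fun σ => by
    linear_combination (X (2*m) x b σ * X (2*m) x b σ) * sqX hx a ha σ + sqX hx b hb σ
  rw [W, Finset.sum_congr rfl (fun σ _ => h σ), Finset.sum_const, Finset.card_univ,
    nsmul_eq_mul, mul_one, NN]

include hm hx in
lemma W_c2_1 (a b c : ℕ) (ha : a < 2 * m) (hb : b < 2 * m) (hc : c < 2 * m) (hbc : b ≠ c) :
    W m x a b a c = C2 m x := by
  have h : ∀ σ : Equiv.Perm (Fin (2 * m)),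
      X (2*m) x a σ * X (2*m) x b σ * (X (2*m) x a σ * X (2*m) x c σ)
        = X (2*m) x b σ * X (2*m) x c σ := fun σ => by
    linear_combination (X (2*m) x b σ * X (2*m) x c σ) * sqX hx a ha σ
  rw [W, Finset.sum_congr rfl (fun σ _ => h σ)]
  exact pairX hm b c hb hc hbc

include hm hx in
lemma W_c2_2 (a b c : ℕ) (ha : a < 2 * m) (hb : b < 2 * m) (hc : c < 2 * m) (hac : a ≠ c) :
    W m x a b c b = C2 m x := by
  have h : ∀ σ : Equiv.Perm (Fin (2 * m)),
      X (2*m) x a σ * X (2*m) x b σ * (X (2*m) x c σ * X (2*m) x b σ)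
        = X (2*m) x a σ * X (2*m) x c σ := fun σ => by
    linear_combination (X (2*m) x a σ * X (2*m) x c σ) * sqX hx b hb σ
  rw [W, Finset.sum_congr rfl (fun σ _ => h σ)]
  exact pairX hm a c ha hc hac

include hm hx in
lemma W_c2_3 (a b c : ℕ) (ha : a < 2 * m) (hb : b < 2 * m) (hc : c < 2 * m) (hbc : b ≠ c) :
    W m x a b c a = C2 m x := by
  have h : ∀ σ : Equiv.Perm (Fin (2 * m)),
      X (2*m) x a σ * X (2*m) x b σ * (X (2*m) x c σ * X (2*m) x a σ)
        = X (2*m) x b σ * X (2*m) x c σ := fun σ => by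
    linear_combination (X (2*m) x b σ * X (2*m) x c σ) * sqX hx a ha σ
  rw [W, Finset.sum_congr rfl (fun σ _ => h σ)]
  exact pairX hm b c hb hc hbc

include hm hx in
lemma W_c2_4 (a b c : ℕ) (ha : a < 2 * m) (hb : b < 2 * m) (hc : c < 2 * m) (hac : a ≠ c) :
    W m x a b b c = C2 m x := by
  have h : ∀ σ : Equiv.Perm (Fin (2 * m)),
      X (2*m) x a σ * X (2*m) x b σ * (X (2*m) x b σ * X (2*m) x c σ)
        = X (2*m) x a σ * X (2*m) x c σ := fun σ => by
    linear_combination (X (2*m) x a σ * X (2*m) x c σ) * sqX hx b hb σ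
  rw [W, Finset.sum_congr rfl (fun σ _ => h σ)]
  exact pairX hm a c ha hc hac

include hm hx in
lemma W_c4 (i j k l : ℕ) (hi : i < 2*m) (hj : j < 2*m) (hk : k < 2*m) (hl : l < 2*m)
    (hij : i ≠ j) (hik : i ≠ k) (hil : i ≠ l) (hjk : j ≠ k) (hjl : j ≠ l) (hkl : k ≠ l) :
    W m x i j k l = C4 m x :=
  quadX hm i j k l hi hj hk hl hij hik hil hjk hjl hkl


include hm hx in
lemma key4 (i j : ℕ) (him : i < m) (hjm : j < m) (hij : i ≠ j) :
    ∑ k ∈ Finset.range m, ∑ l ∈ (Finset.range m).erase k, W m x i j k l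
      = 2 * NN m + 4 * ((m:ℝ) - 2) * C2 m x + ((m:ℝ) - 2) * ((m:ℝ) - 3) * C4 m x := by
  have hi2 : i < 2 * m := by omega
  have hj2 : j < 2 * m := by omega
  have hiR : i ∈ Finset.range m := Finset.mem_range.mpr him
  have hjR : j ∈ Finset.range m := Finset.mem_range.mpr hjm
  have hjEi : j ∈ (Finset.range m).erase i := Finset.mem_erase.mpr ⟨Ne.symm hij, hjR⟩
  have hiEj : i ∈ (Finset.range m).erase j := Finset.mem_erase.mpr ⟨hij, hiR⟩
  have cm2 : ((m - 1 - 1 : ℕ) : ℝ) = (m : ℝ) - 2 := by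
    have e : m - 1 - 1 = m - 2 := by omega
    rw [e, Nat.cast_sub (by omega)]; norm_num
  have gi : ∑ l ∈ (Finset.range m).erase i, W m x i j i l
      = NN m + ((m:ℝ) - 2) * C2 m x := by
    rw [← Finset.add_sum_erase _ _ hjEi, W_N1 hx i j hi2 hj2]
    have each : ∀ l ∈ ((Finset.range m).erase i).erase j, W m x i j i l = C2 m x := by
      intro l hl
      have h1 := Finset.mem_erase.mp hl
      have h2 := Finset.mem_erase.mp h1.2
      have := Finset.mem_range.mp h2.2
      exact W_c2_1 hm hx i j l hi2 hj2 (by omega) (Ne.symm h1.1)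
    rw [Finset.sum_congr rfl each, Finset.sum_const,
      Finset.card_erase_of_mem hjEi, Finset.card_erase_of_mem hiR, Finset.card_range,
      nsmul_eq_mul, cm2]
  have gj : ∑ l ∈ (Finset.range m).erase j, W m x i j j l
      = NN m + ((m:ℝ) - 2) * C2 m x := by
    rw [← Finset.add_sum_erase _ _ hiEj, W_N2 hx i j hi2 hj2]
    have each : ∀ l ∈ ((Finset.range m).erase j).erase i, W m x i j j l = C2 m x := by
      intro l hl
      have h1 := Finset.mem_erase.mp hl
      have h2 := Finset.mem_erase.mp h1.2
      have := Finset.mem_range.mp h2.2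
      exact W_c2_4 hm hx i j l hi2 hj2 (by omega) (Ne.symm h1.1)
    rw [Finset.sum_congr rfl each, Finset.sum_const,
      Finset.card_erase_of_mem hiEj, Finset.card_erase_of_mem hjR, Finset.card_range,
      nsmul_eq_mul, cm2]
  have gk : ∀ k ∈ ((Finset.range m).erase i).erase j,
      ∑ l ∈ (Finset.range m).erase k, W m x i j k l
        = 2 * C2 m x + ((m:ℝ) - 3) * C4 m x := by
    intro k hk
    have hk1 := Finset.mem_erase.mp hk
    have hk2 := Finset.mem_erase.mp hk1.2
    have hkR := hk2.2
    have hkm := Finset.mem_range.mp hkR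
    have hk2m : k < 2 * m := by omega
    have hiEk : i ∈ (Finset.range m).erase k := Finset.mem_erase.mpr ⟨Ne.symm hk2.1, hiR⟩
    have hjEki : j ∈ ((Finset.range m).erase k).erase i :=
      Finset.mem_erase.mpr ⟨Ne.symm hij, Finset.mem_erase.mpr ⟨Ne.symm hk1.1, hjR⟩⟩
    rw [← Finset.add_sum_erase _ _ hiEk, ← Finset.add_sum_erase _ _ hjEki,
      W_c2_3 hm hx i j k hi2 hj2 hk2m (Ne.symm hk1.1),
      W_c2_2 hm hx i j k hi2 hj2 hk2m (Ne.symm hk2.1)]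
    have each : ∀ l ∈ (((Finset.range m).erase k).erase i).erase j,
        W m x i j k l = C4 m x := by
      intro l hl
      have h1 := Finset.mem_erase.mp hl
      have h2 := Finset.mem_erase.mp h1.2
      have h3 := Finset.mem_erase.mp h2.2
      have hlm := Finset.mem_range.mp h3.2
      exact W_c4 hm hx i j k l hi2 hj2 hk2m (by omega) hij (Ne.symm hk2.1)
        (Ne.symm h2.1) (Ne.symm hk1.1) (Ne.symm h1.1) (Ne.symm h3.1)
    rw [Finset.sum_congr rfl each, Finset.sum_const,
      Finset.card_erase_of_mem hjEki, Finset.card_erase_of_mem hiEk,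
      Finset.card_erase_of_mem hkR, Finset.card_range, nsmul_eq_mul]
    have hm3 : 3 ≤ m := by omega
    have cm3 : ((m - 1 - 1 - 1 : ℕ) : ℝ) = (m : ℝ) - 3 := by
      have e : m - 1 - 1 - 1 = m - 3 := by omega
      rw [e, Nat.cast_sub hm3]; norm_num
    rw [cm3]
    ring
  rw [← Finset.add_sum_erase _ _ hiR, gi, ← Finset.add_sum_erase _ _ hjEi, gj,
    Finset.sum_congr rfl gk, Finset.sum_const, Finset.card_erase_of_mem hjEi,
    Finset.card_erase_of_mem hiR, Finset.card_range, nsmul_eq_mul, cm2]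
  ring

include hm hx in
lemma A2sum :
    ∑ σ : Equiv.Perm (Fin (2 * m)), (S (2 * m) x m σ) ^ 2
      = (m : ℝ) * NN m + (m : ℝ) * ((m : ℝ) - 1) * C2 m x := by
  have hpt : ∀ σ : Equiv.Perm (Fin (2 * m)), (S (2 * m) x m σ) ^ 2
      = ∑ i ∈ Finset.range m, ∑ j ∈ Finset.range m,
          X (2 * m) x i σ * X (2 * m) x j σ := fun σ => by
    rw [sq, S, Finset.sum_mul_sum]
  rw [Finset.sum_congr rfl (fun σ _ => hpt σ), Finset.sum_comm]
  have cm1 : ((m - 1 : ℕ) : ℝ) = (m : ℝ) - 1 := by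
    rw [Nat.cast_sub (by omega)]; norm_num
  have inner : ∀ i ∈ Finset.range m,
      (∑ σ : Equiv.Perm (Fin (2 * m)), ∑ j ∈ Finset.range m,
          X (2 * m) x i σ * X (2 * m) x j σ)
        = NN m + ((m : ℝ) - 1) * C2 m x := by
    intro i hi
    have him := Finset.mem_range.mp hi
    rw [Finset.sum_comm, ← Finset.add_sum_erase _ _ hi, sumXX hx i (by omega)]
    have each : ∀ j ∈ (Finset.range m).erase i,
        (∑ σ : Equiv.Perm (Fin (2 * m)), X (2 * m) x i σ * X (2 * m) x j σ)
          = C2 m x := by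
      intro j hj
      have h1 := Finset.mem_erase.mp hj
      have := Finset.mem_range.mp h1.2
      exact pairX hm i j (by omega) (by omega) (Ne.symm h1.1)
    rw [Finset.sum_congr rfl each, Finset.sum_const, Finset.card_erase_of_mem hi,
      Finset.card_range, nsmul_eq_mul, cm1]
  rw [Finset.sum_congr rfl inner, Finset.sum_const, Finset.card_range, nsmul_eq_mul]
  ring


def P (m : ℕ) (x : Fin (2 * m) → ℝ) (σ : Equiv.Perm (Fin (2 * m))) : ℝ :=
  ∑ i ∈ Finset.range m, ∑ j ∈ (Finset.range m).erase i,
    X (2 * m) x i σ * X (2 * m) x j σ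

include hx in
lemma S2P (σ : Equiv.Perm (Fin (2 * m))) :
    (S (2 * m) x m σ) ^ 2 = (m : ℝ) + P m x σ := by
  rw [sq, S, Finset.sum_mul_sum, P]
  have inner : ∀ i ∈ Finset.range m,
      ∑ j ∈ Finset.range m, X (2 * m) x i σ * X (2 * m) x j σ
        = 1 + ∑ j ∈ (Finset.range m).erase i, X (2 * m) x i σ * X (2 * m) x j σ := by
    intro i hi
    have him := Finset.mem_range.mp hi
    rw [← Finset.add_sum_erase _ _ hi, sqX hx i (by omega)]
  rw [Finset.sum_congr rfl inner, Finset.sum_add_distrib, Finset.sum_const,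
    Finset.card_range, nsmul_eq_mul, mul_one]

include hm hx in
lemma Psum : ∑ σ : Equiv.Perm (Fin (2 * m)), P m x σ
    = (m : ℝ) * ((m : ℝ) - 1) * C2 m x := by
  simp only [P]
  rw [Finset.sum_comm]
  have cm1 : ((m - 1 : ℕ) : ℝ) = (m : ℝ) - 1 := by
    rw [Nat.cast_sub (by omega)]; norm_num
  have inner : ∀ i ∈ Finset.range m,
      (∑ σ : Equiv.Perm (Fin (2 * m)), ∑ j ∈ (Finset.range m).erase i,
          X (2 * m) x i σ * X (2 * m) x j σ)
        = ((m : ℝ) - 1) * C2 m x := by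
    intro i hi
    have him := Finset.mem_range.mp hi
    rw [Finset.sum_comm]
    have each : ∀ j ∈ (Finset.range m).erase i,
        (∑ σ : Equiv.Perm (Fin (2 * m)), X (2 * m) x i σ * X (2 * m) x j σ)
          = C2 m x := by
      intro j hj
      have h1 := Finset.mem_erase.mp hj
      have := Finset.mem_range.mp h1.2
      exact pairX hm i j (by omega) (by omega) (Ne.symm h1.1)
    rw [Finset.sum_congr rfl each, Finset.sum_const, Finset.card_erase_of_mem hi,
      Finset.card_range, nsmul_eq_mul, cm1]
  rw [Finset.sum_congr rfl inner, Finset.sum_const, Finset.card_range, nsmul_eq_mul]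
  ring

include hm hx in
lemma P2sum : ∑ σ : Equiv.Perm (Fin (2 * m)), (P m x σ) ^ 2
    = (m : ℝ) * ((m : ℝ) - 1)
      * (2 * NN m + 4 * ((m:ℝ) - 2) * C2 m x + ((m:ℝ) - 2) * ((m:ℝ) - 3) * C4 m x) := by
  have hpt : ∀ σ : Equiv.Perm (Fin (2 * m)), (P m x σ) ^ 2
      = ∑ i ∈ Finset.range m, ∑ j ∈ (Finset.range m).erase i,
          X (2 * m) x i σ * X (2 * m) x j σ * P m x σ := by
    intro σ
    calc (P m x σ) ^ 2
        = (∑ i ∈ Finset.range m, ∑ j ∈ (Finset.range m).erase i,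
            X (2 * m) x i σ * X (2 * m) x j σ) * P m x σ := by rw [sq, P]
      _ = ∑ i ∈ Finset.range m, (∑ j ∈ (Finset.range m).erase i,
            X (2 * m) x i σ * X (2 * m) x j σ) * P m x σ := Finset.sum_mul _ _ _
      _ = _ := Finset.sum_congr rfl fun i _ => Finset.sum_mul _ _ _
  rw [Finset.sum_congr rfl (fun σ _ => hpt σ), Finset.sum_comm]
  have inner : ∀ i ∈ Finset.range m,
      (∑ σ : Equiv.Perm (Fin (2 * m)), ∑ j ∈ (Finset.range m).erase i,
          X (2 * m) x i σ * X (2 * m) x j σ * P m x σ)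
        = ((m : ℝ) - 1) * (2 * NN m + 4 * ((m:ℝ) - 2) * C2 m x
            + ((m:ℝ) - 2) * ((m:ℝ) - 3) * C4 m x) := by
    intro i hi
    have him := Finset.mem_range.mp hi
    rw [Finset.sum_comm]
    have each : ∀ j ∈ (Finset.range m).erase i,
        (∑ σ : Equiv.Perm (Fin (2 * m)), X (2 * m) x i σ * X (2 * m) x j σ * P m x σ)
          = 2 * NN m + 4 * ((m:ℝ) - 2) * C2 m x + ((m:ℝ) - 2) * ((m:ℝ) - 3) * C4 m x := by
      intro j hj
      have h1 := Finset.mem_erase.mp hj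
      have hjm := Finset.mem_range.mp h1.2
      have expand : ∀ σ : Equiv.Perm (Fin (2 * m)),
          X (2 * m) x i σ * X (2 * m) x j σ * P m x σ
            = ∑ k ∈ Finset.range m, ∑ l ∈ (Finset.range m).erase k,
                X (2 * m) x i σ * X (2 * m) x j σ * (X (2 * m) x k σ * X (2 * m) x l σ) := by
        intro σ
        rw [P, Finset.mul_sum]
        exact Finset.sum_congr rfl fun k _ => Finset.mul_sum _ _ _
      rw [Finset.sum_congr rfl (fun σ _ => expand σ), Finset.sum_comm]
      have swap2 : ∀ k ∈ Finset.range m,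
          (∑ σ : Equiv.Perm (Fin (2 * m)), ∑ l ∈ (Finset.range m).erase k,
              X (2 * m) x i σ * X (2 * m) x j σ * (X (2 * m) x k σ * X (2 * m) x l σ))
            = ∑ l ∈ (Finset.range m).erase k, W m x i j k l := by
        intro k _
        rw [Finset.sum_comm]
        rfl
      rw [Finset.sum_congr rfl swap2]
      exact key4 hm hx i j him hjm (Ne.symm h1.1)
    rw [Finset.sum_congr rfl each, Finset.sum_const, Finset.card_erase_of_mem hi,
      Finset.card_range, nsmul_eq_mul]
    rw [Nat.cast_sub (by omega : 1 ≤ m)]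
    norm_num
  rw [Finset.sum_congr rfl inner, Finset.sum_const, Finset.card_range, nsmul_eq_mul]
  ring

include hm hx in
lemma A4sum :
    ∑ σ : Equiv.Perm (Fin (2 * m)), (S (2 * m) x m σ) ^ 4
      = (m : ℝ) ^ 2 * NN m + 2 * (m : ℝ) * ((m : ℝ) * ((m : ℝ) - 1) * C2 m x)
        + (m : ℝ) * ((m : ℝ) - 1)
          * (2 * NN m + 4 * ((m:ℝ) - 2) * C2 m x + ((m:ℝ) - 2) * ((m:ℝ) - 3) * C4 m x) := by
  have hpt : ∀ σ : Equiv.Perm (Fin (2 * m)), (S (2 * m) x m σ) ^ 4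
      = (m : ℝ) ^ 2 + 2 * (m : ℝ) * P m x σ + (P m x σ) ^ 2 := by
    intro σ
    have h2 := S2P hx σ
    have : (S (2 * m) x m σ) ^ 4 = ((S (2 * m) x m σ) ^ 2) ^ 2 := by ring
    rw [this, h2]
    ring
  rw [Finset.sum_congr rfl (fun σ _ => hpt σ), Finset.sum_add_distrib,
    Finset.sum_add_distrib, Finset.sum_const, Finset.card_univ, nsmul_eq_mul,
    ← Finset.mul_sum, Psum hm hx, P2sum hm hx]
  rw [show ((Fintype.card (Equiv.Perm (Fin (2 * m))) : ℝ)) = NN m from rfl]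
  ring


end main

theorem statement15 (m : ℕ) (hm : 2 ≤ m)
    (x : Fin (2 * m) → ℝ) (hx : ∀ i : Fin (2 * m), x i = if (i : ℕ) < m then 1 else -1) :
    ∫ σ, (S (2 * m) x m σ) ^ 2 ∂(permMeasure (2 * m))
        = (m : ℝ) ^ 2 / (2 * (m : ℝ) - 1) ∧
    ∫ σ, (S (2 * m) x m σ) ^ 4 ∂(permMeasure (2 * m))
        = (3 * (m : ℝ) ^ 4 - 4 * (m : ℝ) ^ 3) / (4 * (m : ℝ) ^ 2 - 8 * (m : ℝ) + 3) := by
  have hN : NN m ≠ 0 := by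
    rw [NN]
    exact Nat.cast_ne_zero.mpr Fintype.card_ne_zero
  have hm' : (2 : ℝ) ≤ (m : ℝ) := by exact_mod_cast hm
  have h21 : 2 * (m : ℝ) - 1 ≠ 0 := ne_of_gt (by linarith)
  have h23 : 2 * (m : ℝ) - 3 ≠ 0 := ne_of_gt (by linarith)
  have e2 := c2_eq hm hx
  have e4 := c4_eq hm hx
  have hC2 : C2 m x = -(NN m) / (2 * (m : ℝ) - 1) := by
    rw [eq_div_iff h21]; linear_combination e2
  have hC4 : C4 m x = 3 * NN m / ((2 * (m : ℝ) - 1) * (2 * (m : ℝ) - 3)) := by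
    rw [eq_div_iff (mul_ne_zero h21 h23)]
    linear_combination (2 * (m : ℝ) - 1) * e4 - 3 * e2
  have hcard : ((Fintype.card (Equiv.Perm (Fin (2 * m))) : ℝ)) = NN m := rfl
  constructor
  · rw [integral_perm, A2sum hm hx, hcard, hC2]
    have h21' : (m : ℝ) * 2 - 1 ≠ 0 := by rw [mul_comm]; exact h21
    field_simp
    ring
  · rw [integral_perm, A4sum hm hx, hcard, hC2, hC4]
    have hfac : 4 * (m : ℝ) ^ 2 - 8 * (m : ℝ) + 3 = (2 * (m : ℝ) - 1) * (2 * (m : ℝ) - 3) := by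
      ring
    rw [hfac]
    have h21' : (m : ℝ) * 2 - 1 ≠ 0 := by rw [mul_comm]; exact h21
    have h23' : (m : ℝ) * 2 - 3 ≠ 0 := by rw [mul_comm]; exact h23
    field_simp
    ring


end
end

section
/- For real numbers x_1,...,x_n with x_1+...+x_n = 0, the average over all permutations sigma of max_{1<=k<=n} | sum_{i=1}^k (-1)^i x_{sigma(i)} |^2 is at most (17 + 16/17) sum_{i=1}^n x_i^2. -/
open MeasureTheory Finset

noncomputable section

set_option linter.unnecessarySeqFocus false
set_option linter.unusedTactic false

namespace Aux18



def A (n : ℕ) (x : Fin n → ℝ) (σ : Equiv.Perm (Fin n)) (k : ℕ) : ℝ :=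
  ∑ i ∈ Finset.univ.filter (fun i : Fin n => (i : ℕ) < k),
    (-1 : ℝ) ^ ((i : ℕ) + 1) * x (σ i)

def RM (b : ℕ → ℝ) : ℕ → ℝ
  | 0 => b 0
  | k + 1 => max (RM b k) (b (k + 1))

lemma filter_succ (n k : ℕ) (hk : k < n) :
    (Finset.univ.filter (fun i : Fin n => (i : ℕ) < k + 1)) =
      insert (⟨k, hk⟩ : Fin n) (Finset.univ.filter (fun i : Fin n => (i : ℕ) < k)) := by
  ext i
  simp [Fin.ext_iff]
  omega

lemma A_succ (n : ℕ) (x : Fin n → ℝ) (σ : Equiv.Perm (Fin n)) (k : ℕ) (hk : k < n) :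
    A n x σ (k + 1) = A n x σ k + (-1 : ℝ) ^ (k + 1) * x (σ ⟨k, hk⟩) := by
  rw [A, A, filter_succ n k hk, Finset.sum_insert (by simp)]
  ring

lemma A_comp (n : ℕ) (x : Fin n → ℝ) (σ τ : Equiv.Perm (Fin n)) (k : ℕ)
    (h : ∀ i : Fin n, (i : ℕ) < k → τ i = i) :
    A n x (σ * τ) k = A n x σ k := by
  unfold A
  refine Finset.sum_congr rfl ?_
  intro i hi
  simp only [Finset.mem_filter, Finset.mem_univ, true_and] at hi
  rw [Equiv.Perm.mul_apply, h i hi]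

lemma sum_perm_comp {n : ℕ} (f : Equiv.Perm (Fin n) → ℝ) (τ : Equiv.Perm (Fin n)) :
    ∑ σ : Equiv.Perm (Fin n), f (σ * τ) = ∑ σ : Equiv.Perm (Fin n), f σ :=
  Fintype.sum_equiv (Equiv.mulRight τ) _ _ (fun _ => rfl)

lemma RM_nonneg (b : ℕ → ℝ) (hb : ∀ k, 0 ≤ b k) : ∀ N, 0 ≤ RM b N
  | 0 => hb 0
  | N + 1 => le_trans (RM_nonneg b hb N) (le_max_left _ _)

lemma le_RM (b : ℕ → ℝ) : ∀ N j, j ≤ N → b j ≤ RM b N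
  | 0, j, hj => by
      have : j = 0 := Nat.le_zero.mp hj
      subst this; exact le_of_eq rfl
  | N + 1, j, hj => by
      rcases Nat.lt_or_ge j (N + 1) with h | h
      · exact le_trans (le_RM b N j (Nat.lt_succ_iff.mp h)) (le_max_left _ _)
      · have : j = N + 1 := le_antisymm hj h
        subst this
        exact le_max_right _ _

lemma RM_congr (b b' : ℕ → ℝ) : ∀ N, (∀ j ≤ N, b j = b' j) → RM b N = RM b' N
  | 0, h => h 0 le_rfl
  | N + 1, h => by
      rw [RM, RM, RM_congr b b' N (fun j hj => h j (le_trans hj (Nat.le_succ N))),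
        h (N+1) le_rfl]

lemma doob_aux (b : ℕ → ℝ) (N : ℕ) :
    4 * ∑ k ∈ range N, RM b k * (b (k + 1) - b k) ≤
      4 * RM b N * b N - 2 * (RM b N) ^ 2 - 2 * (b 0) ^ 2 := by
  induction N with
  | zero => simp [RM]; nlinarith [sq_nonneg (b 0)]
  | succ N ih =>
      rw [Finset.sum_range_succ]
      have hcase : RM b (N+1) = max (RM b N) (b (N+1)) := rfl
      rcases max_cases (RM b N) (b (N+1)) with ⟨h1, h2⟩ | ⟨h1, h2⟩
      · rw [hcase, h1]; nlinarith
      · rw [hcase, h1]; nlinarith [sq_nonneg (b (N+1) - RM b N)]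

lemma doob (b : ℕ → ℝ) (N : ℕ) :
    (RM b N) ^ 2 ≤ 4 * (b N) ^ 2 - 4 * ∑ k ∈ range N, RM b k * (b (k + 1) - b k) := by
  have h := doob_aux b N
  nlinarith [sq_nonneg (2 * b N - RM b N), sq_nonneg (b 0)]


lemma filter_sum (n m : ℕ) (hm : m ≤ n) (g : ℕ → ℝ) :
    ∑ i ∈ Finset.univ.filter (fun i : Fin n => (i : ℕ) < m), g (i : ℕ) =
      ∑ k ∈ range m, g k := by
  rw [Finset.sum_filter]
  rw [Fin.sum_univ_eq_sum_range (fun k => if k < m then g k else 0) n]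
  rw [← Finset.sum_filter]
  congr 1
  ext k
  simp only [Finset.mem_filter, Finset.mem_range]
  omega

lemma sum_c (N : ℕ) : ∑ k ∈ range (2 * N), (-1 : ℝ) ^ (k + 1) = 0 := by
  induction N with
  | zero => simp
  | succ N ih =>
      have h : 2 * (N + 1) = 2 * N + 1 + 1 := by ring
      rw [h, Finset.sum_range_succ, Finset.sum_range_succ, ih]
      rw [pow_succ, pow_succ]
      ring

lemma sum_c_sq (N : ℕ) : ∑ k ∈ range (2 * N), ((-1 : ℝ) ^ (k + 1)) ^ 2 = 2 * N := by
  have : ∀ k ∈ range (2 * N), ((-1 : ℝ) ^ (k + 1)) ^ 2 = 1 := by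
    intro k _
    rw [← pow_mul, mul_comm, pow_mul]
    norm_num
  rw [Finset.sum_congr rfl this]
  simp [mul_comm]


section W
variable {n : ℕ} (x : Fin n → ℝ)

def w (n : ℕ) (x : Fin n → ℝ) (i j : Fin n) : ℝ :=
  ∑ σ : Equiv.Perm (Fin n), x (σ i) * x (σ j)

lemma w_symm (i j : Fin n) : w n x i j = w n x j i := by
  unfold w
  exact Finset.sum_congr rfl (fun σ _ => mul_comm _ _)

lemma w_swap (i j j' : Fin n) (hj : j ≠ i) (hj' : j' ≠ i) :
    w n x i j = w n x i j' := by
  unfold w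
  have := sum_perm_comp (fun σ => x (σ i) * x (σ j)) (Equiv.swap j j')
  rw [← this]
  refine Finset.sum_congr rfl (fun σ _ => ?_)
  rw [Equiv.Perm.mul_apply, Equiv.Perm.mul_apply,
    Equiv.swap_apply_of_ne_of_ne (Ne.symm hj) (Ne.symm hj'), Equiv.swap_apply_left]

lemma w_diag (i i' : Fin n) : w n x i i = w n x i' i' := by
  unfold w
  have := sum_perm_comp (fun σ => x (σ i') * x (σ i')) (Equiv.swap i' i)
  rw [← this]
  refine Finset.sum_congr rfl (fun σ _ => ?_)
  rw [Equiv.Perm.mul_apply, Equiv.swap_apply_left]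

lemma w_off (i j i' j' : Fin n) (hij : i ≠ j) (hij' : i' ≠ j') :
    w n x i j = w n x i' j' := by
  -- first: reduce to showing any two off-diagonal entries equal; do chain
  have key : ∀ a b c d : Fin n, a ≠ b → c ≠ d → w n x a b = w n x c d := by
    intro a b c d hab hcd
    by_cases h1 : a = c
    · subst h1
      by_cases h2 : b = d
      · subst h2; rfl
      · exact w_swap x a b d (Ne.symm hab) (Ne.symm hcd)
    · by_cases h3 : b = c
      · subst h3
        rw [w_symm]
        by_cases h4 : a = d
        · subst h4; rfl
        · exact w_swap x b a d hab (Ne.symm hcd)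
      · -- a ≠ c, b ≠ c
        have : w n x a b = w n x a c := by
          by_cases h5 : c = a
          · exact absurd h5.symm h1
          · exact w_swap x a b c (Ne.symm hab) h5
        rw [this, w_symm]
        by_cases h6 : a = d
        · subst h6; rfl
        · exact w_swap x c a d (fun h => h1 h) (fun h => hcd h.symm)
  exact key i j i' j' hij hij'

lemma sum_w_erase (hx : ∑ i, x i = 0) (i : Fin n) :
    ∑ j ∈ Finset.univ.erase i, w n x i j = - w n x i i := by
  unfold w
  rw [Finset.sum_comm]
  rw [← Finset.sum_neg_distrib]
  refine Finset.sum_congr rfl (fun σ _ => ?_)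
  rw [← Finset.mul_sum]
  have h1 : ∑ j ∈ Finset.univ.erase i, x (σ j) = - x (σ i) := by
    have h2 : ∑ j : Fin n, x (σ j) = 0 := by
      rw [Equiv.sum_comp σ x]; exact hx
    have := Finset.sum_erase_add Finset.univ (fun j => x (σ j)) (Finset.mem_univ i)
    linarith [this.symm ▸ h2]
  rw [h1]; ring

end W

lemma A_zero (n : ℕ) (x : Fin n → ℝ) (σ : Equiv.Perm (Fin n)) : A n x σ 0 = 0 := by
  unfold A
  apply Finset.sum_eq_zero
  intro i hi
  simp at hi

lemma key3 (n : ℕ) (hn : 1 ≤ n) (x : Fin n → ℝ) (hx : ∑ i, x i = 0) :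
    ∑ σ : Equiv.Perm (Fin n), (A n x σ (2 * (n / 2))) ^ 2
      ≤ 2 * (Nat.factorial n : ℝ) * ∑ i, (x i) ^ 2 := by
  have hs : (0:ℝ) ≤ ∑ i, (x i) ^ 2 := Finset.sum_nonneg (fun i _ => sq_nonneg _)
  rcases eq_or_lt_of_le hn with h1 | h2
  · -- n = 1
    have hn1 : n = 1 := h1.symm
    subst hn1
    simp only [Nat.reduceDiv, Nat.mul_zero, A_zero]
    simp
    positivity
  · -- n ≥ 2
    have hn2 : 2 ≤ n := h2
    set N := n / 2 with hN
    have hmn : 2 * N ≤ n := by omega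
    have hNn1 : N ≤ n - 1 := by omega
    set s := ∑ i, (x i) ^ 2 with hsdef
    have h0n : 0 < n := by omega
    have h1n : 1 < n := by omega
    set i0 : Fin n := ⟨0, h0n⟩ with hi0
    set i1 : Fin n := ⟨1, h1n⟩ with hi1
    have hi01 : i0 ≠ i1 := by simp [hi0, hi1, Fin.ext_iff]
    set v : ℝ := w n x i0 i0 with hv
    set u : ℝ := w n x i0 i1 with hu
    have hdiag : ∀ i : Fin n, w n x i i = v := fun i => w_diag x i i0
    have hoff : ∀ i j : Fin n, i ≠ j → w n x i j = u :=
      fun i j hij => w_off x i j i0 i1 hij hi01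
    -- (n-1) * u = -v
    have hcard : ((Finset.univ.erase i0).card : ℝ) = (n : ℝ) - 1 := by
      rw [Finset.card_erase_of_mem (Finset.mem_univ i0), Finset.card_univ, Fintype.card_fin]
      rw [Nat.cast_sub hn]
      norm_num
    have hnu : ((n : ℝ) - 1) * u = -v := by
      have h := sum_w_erase x hx i0
      rw [Finset.sum_congr rfl (fun j hj => hoff i0 j
        (Ne.symm (Finset.ne_of_mem_erase hj)))] at h
      rw [Finset.sum_const, nsmul_eq_mul, hcard] at h
      rw [h, hdiag]
    -- n * v = n! * s
    have hnv : (n : ℝ) * v = (Nat.factorial n : ℝ) * s := by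
      have h1 : ∑ i : Fin n, w n x i i = (n : ℝ) * v := by
        rw [Finset.sum_congr rfl (fun i _ => hdiag i), Finset.sum_const,
          Finset.card_univ, Fintype.card_fin, nsmul_eq_mul]
      have h2 : ∑ i : Fin n, w n x i i = (Nat.factorial n : ℝ) * s := by
        unfold w
        rw [Finset.sum_comm]
        have h3 : ∀ σ : Equiv.Perm (Fin n), ∑ i : Fin n, x (σ i) * x (σ i) = s := by
          intro σ
          rw [Equiv.sum_comp σ (fun a => x a * x a)]
          exact Finset.sum_congr rfl (fun a _ => (sq (x a)).symm ▸ (pow_two (x a)).symm ▸ by ring)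
        rw [Finset.sum_congr rfl (fun σ _ => h3 σ), Finset.sum_const,
          Finset.card_univ, Fintype.card_perm, Fintype.card_fin, nsmul_eq_mul]
      rw [← h1, h2]
    have hvnonneg : 0 ≤ v := by
      rw [hv]
      exact Finset.sum_nonneg (fun σ _ => mul_self_nonneg _)
    -- expansion
    set E : ℝ := ∑ σ : Equiv.Perm (Fin n), (A n x σ (2 * N)) ^ 2 with hE
    have hexp : E = (2 * N : ℝ) * (v - u) := by
      have hsq : ∀ σ : Equiv.Perm (Fin n), (A n x σ (2 * N)) ^ 2 =
          ∑ i ∈ Finset.univ.filter (fun i : Fin n => (i : ℕ) < 2 * N),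
            ∑ j ∈ Finset.univ.filter (fun j : Fin n => (j : ℕ) < 2 * N),
              ((-1 : ℝ) ^ ((i : ℕ) + 1) * (-1 : ℝ) ^ ((j : ℕ) + 1)) * (x (σ i) * x (σ j)) := by
        intro σ
        rw [pow_two, A, Finset.sum_mul_sum]
        exact Finset.sum_congr rfl (fun i _ => Finset.sum_congr rfl (fun j _ => by ring))
      rw [hE, Finset.sum_congr rfl (fun σ _ => hsq σ), Finset.sum_comm]
      have hswap : ∀ i : Fin n,
          ∑ σ : Equiv.Perm (Fin n), ∑ j ∈ Finset.univ.filter (fun j : Fin n => (j : ℕ) < 2 * N),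
              ((-1 : ℝ) ^ ((i : ℕ) + 1) * (-1 : ℝ) ^ ((j : ℕ) + 1)) * (x (σ i) * x (σ j))
          = ∑ j ∈ Finset.univ.filter (fun j : Fin n => (j : ℕ) < 2 * N),
              ((-1 : ℝ) ^ ((i : ℕ) + 1) * (-1 : ℝ) ^ ((j : ℕ) + 1)) * w n x i j := by
        intro i
        rw [Finset.sum_comm]
        exact Finset.sum_congr rfl (fun j _ => by rw [← Finset.mul_sum]; rfl)
      rw [Finset.sum_congr rfl (fun i _ => hswap i)]
      have hwij : ∀ i j : Fin n, w n x i j = u + (if i = j then v - u else 0) := by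
        intro i j
        by_cases h : i = j
        · subst h; rw [hdiag]; simp
        · rw [hoff i j h]; simp [h]
      rw [Finset.sum_congr rfl (fun i _ => Finset.sum_congr rfl (fun j _ => by
        rw [hwij i j]))]
      have split : ∀ i j : Fin n, ((-1 : ℝ) ^ ((i : ℕ) + 1) * (-1 : ℝ) ^ ((j : ℕ) + 1)) *
          (u + (if i = j then v - u else 0)) =
          ((-1 : ℝ) ^ ((i : ℕ) + 1) * (-1 : ℝ) ^ ((j : ℕ) + 1)) * u +
          (if i = j then ((-1 : ℝ) ^ ((i : ℕ) + 1) * (-1 : ℝ) ^ ((j : ℕ) + 1)) * (v - u) else 0) := by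
        intro i j
        by_cases h : i = j <;> simp [h] <;> ring
      rw [Finset.sum_congr rfl (fun i _ => Finset.sum_congr rfl (fun j _ => split i j))]
      simp only [Finset.sum_add_distrib]
      have hFc : ∑ i ∈ Finset.univ.filter (fun i : Fin n => (i : ℕ) < 2 * N),
          (-1 : ℝ) ^ ((i : ℕ) + 1) = 0 := by
        rw [filter_sum n (2 * N) hmn (fun k => (-1 : ℝ) ^ (k + 1))]
        exact sum_c N
      have hpart1 : ∑ i ∈ Finset.univ.filter (fun i : Fin n => (i : ℕ) < 2 * N),
          ∑ j ∈ Finset.univ.filter (fun j : Fin n => (j : ℕ) < 2 * N),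
            ((-1 : ℝ) ^ ((i : ℕ) + 1) * (-1 : ℝ) ^ ((j : ℕ) + 1)) * u = 0 := by
        have : ∀ i : Fin n, ∑ j ∈ Finset.univ.filter (fun j : Fin n => (j : ℕ) < 2 * N),
            ((-1 : ℝ) ^ ((i : ℕ) + 1) * (-1 : ℝ) ^ ((j : ℕ) + 1)) * u = 0 := by
          intro i
          rw [← Finset.sum_mul, ← Finset.mul_sum, hFc]
          ring
        rw [Finset.sum_congr rfl (fun i _ => this i)]
        simp
      have hpart2 : ∑ i ∈ Finset.univ.filter (fun i : Fin n => (i : ℕ) < 2 * N),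
          ∑ j ∈ Finset.univ.filter (fun j : Fin n => (j : ℕ) < 2 * N),
            (if i = j then ((-1 : ℝ) ^ ((i : ℕ) + 1) * (-1 : ℝ) ^ ((j : ℕ) + 1)) * (v - u) else 0)
          = (2 * N : ℝ) * (v - u) := by
        have hinner : ∀ i ∈ Finset.univ.filter (fun i : Fin n => (i : ℕ) < 2 * N),
            ∑ j ∈ Finset.univ.filter (fun j : Fin n => (j : ℕ) < 2 * N),
              (if i = j then ((-1 : ℝ) ^ ((i : ℕ) + 1) * (-1 : ℝ) ^ ((j : ℕ) + 1)) * (v - u) else 0)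
            = ((-1 : ℝ) ^ ((i : ℕ) + 1)) ^ 2 * (v - u) := by
          intro i hi
          rw [Finset.sum_ite_eq _ i (fun j => ((-1 : ℝ) ^ ((i : ℕ) + 1) * (-1 : ℝ) ^ ((j : ℕ) + 1)) * (v - u))]
          rw [if_pos hi]
          ring
        rw [Finset.sum_congr rfl hinner, ← Finset.sum_mul]
        rw [filter_sum n (2 * N) hmn (fun k => ((-1 : ℝ) ^ (k + 1)) ^ 2), sum_c_sq N]
      rw [hpart1, hpart2]
      ring
    -- conclude
    have hfin : ((n : ℝ) - 1) * E = (2 * N : ℝ) * ((Nat.factorial n : ℝ) * s) := by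
      have : ((n : ℝ) - 1) * (v - u) = (n : ℝ) * v := by
        nlinarith [hnu]
      calc ((n : ℝ) - 1) * E = (2 * N : ℝ) * (((n : ℝ) - 1) * (v - u)) := by rw [hexp]; ring
        _ = (2 * N : ℝ) * ((n : ℝ) * v) := by rw [this]
        _ = (2 * N : ℝ) * ((Nat.factorial n : ℝ) * s) := by rw [hnv]
    have hpos : (0 : ℝ) < (n : ℝ) - 1 := by
      have : (2 : ℝ) ≤ (n : ℝ) := by exact_mod_cast hn2
      linarith
    have h2N : (2 * N : ℝ) ≤ 2 * ((n : ℝ) - 1) := by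
      have : (2 * N : ℕ) ≤ 2 * (n - 1) := by omega
      have h' : ((2 * N : ℕ) : ℝ) ≤ ((2 * (n - 1) : ℕ) : ℝ) := by exact_mod_cast this
      push_cast [Nat.cast_sub hn] at h'
      push_cast
      linarith
    have hfs : (0 : ℝ) ≤ (Nat.factorial n : ℝ) * s :=
      mul_nonneg (by positivity) hs
    have : E * ((n : ℝ) - 1) ≤ (2 * (Nat.factorial n : ℝ) * s) * ((n : ℝ) - 1) := by
      nlinarith [hfin, mul_le_mul_of_nonneg_right h2N hfs]
    exact le_of_mul_le_mul_right this hpos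

lemma key2 (n : ℕ) (x : Fin n → ℝ) (k : ℕ) (hk : 2 * k + 1 < n) :
    0 ≤ ∑ σ : Equiv.Perm (Fin n),
      RM (fun j => |A n x σ (2 * j)|) k *
        (|A n x σ (2 * (k + 1))| - |A n x σ (2 * k)|) := by
  have h2k : 2 * k < n := by omega
  set p : Fin n := ⟨2 * k, h2k⟩ with hp
  set q : Fin n := ⟨2 * k + 1, hk⟩ with hq
  set τ : Equiv.Perm (Fin n) := Equiv.swap p q with hτ
  set f : Equiv.Perm (Fin n) → ℝ := fun σ =>
      RM (fun j => |A n x σ (2 * j)|) k *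
        (|A n x σ (2 * (k + 1))| - |A n x σ (2 * k)|) with hf
  have hτfix : ∀ i : Fin n, (i : ℕ) < 2 * k → τ i = i := by
    intro i hi
    apply Equiv.swap_apply_of_ne_of_ne
    · intro h; rw [h] at hi; simp [hp] at hi
    · intro h; rw [h] at hi; simp [hq] at hi
  have hAcomp : ∀ (σ : Equiv.Perm (Fin n)) (j : ℕ), j ≤ 2 * k →
      A n x (σ * τ) j = A n x σ j := by
    intro σ j hj
    exact A_comp n x σ τ j (fun i hi => hτfix i (lt_of_lt_of_le hi hj))
  have hpair : ∀ σ : Equiv.Perm (Fin n), 0 ≤ f σ + f (σ * τ) := by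
    intro σ
    have hM : RM (fun j => |A n x (σ * τ) (2 * j)|) k = RM (fun j => |A n x σ (2 * j)|) k := by
      apply RM_congr
      intro j hj
      rw [hAcomp σ (2 * j) (by omega)]
    have hA2k : A n x (σ * τ) (2 * k) = A n x σ (2 * k) := hAcomp σ (2 * k) le_rfl
    have e1 : 2 * (k + 1) = (2 * k + 1) + 1 := by ring
    have hτp : (σ * τ) p = σ q := by
      rw [Equiv.Perm.mul_apply, hτ, Equiv.swap_apply_left]
    have hτq : (σ * τ) q = σ p := by
      rw [Equiv.Perm.mul_apply, hτ, Equiv.swap_apply_right]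
    have hAσ : A n x σ (2 * (k + 1)) =
        A n x σ (2 * k) + (-1 : ℝ) ^ (2 * k + 1) * x (σ p) + (-1 : ℝ) ^ (2 * k + 1 + 1) * x (σ q) := by
      rw [e1, A_succ n x σ (2 * k + 1) hk, A_succ n x σ (2 * k) h2k]
    have hAστ : A n x (σ * τ) (2 * (k + 1)) =
        A n x σ (2 * k) + (-1 : ℝ) ^ (2 * k + 1) * x (σ q) + (-1 : ℝ) ^ (2 * k + 1 + 1) * x (σ p) := by
      rw [e1, A_succ n x (σ * τ) (2 * k + 1) hk, A_succ n x (σ * τ) (2 * k) h2k,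
        hA2k]
      have : (⟨2 * k, h2k⟩ : Fin n) = p := rfl
      rw [this]
      have : (⟨2 * k + 1, hk⟩ : Fin n) = q := rfl
      rw [this, hτp, hτq]
    have hsum2 : A n x σ (2 * (k + 1)) + A n x (σ * τ) (2 * (k + 1)) = 2 * A n x σ (2 * k) := by
      rw [hAσ, hAστ, pow_succ]
      ring
    have habs : 2 * |A n x σ (2 * k)| ≤ |A n x σ (2 * (k + 1))| + |A n x (σ * τ) (2 * (k + 1))| := by
      calc 2 * |A n x σ (2 * k)| = |A n x σ (2 * (k + 1)) + A n x (σ * τ) (2 * (k + 1))| := by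
            rw [hsum2, abs_mul]; simp
        _ ≤ _ := abs_add_le _ _
    have hMnn : 0 ≤ RM (fun j => |A n x σ (2 * j)|) k :=
      RM_nonneg _ (fun j => abs_nonneg _) k
    rw [hf]
    simp only [hM, hA2k]
    rw [← mul_add]
    apply mul_nonneg hMnn
    linarith
  have hdouble : ∑ σ : Equiv.Perm (Fin n), f σ + ∑ σ : Equiv.Perm (Fin n), f σ =
      ∑ σ : Equiv.Perm (Fin n), (f σ + f (σ * τ)) := by
    rw [Finset.sum_add_distrib, sum_perm_comp f τ]
  have h0 : 0 ≤ ∑ σ : Equiv.Perm (Fin n), (f σ + f (σ * τ)) :=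
    Finset.sum_nonneg (fun σ _ => hpair σ)
  rw [← hdouble] at h0
  linarith

lemma key1 (n : ℕ) (hn : 1 ≤ n) (x : Fin n → ℝ) (σ : Equiv.Perm (Fin n)) :
    (Finset.Icc 1 n).sup' (Finset.nonempty_Icc.mpr hn) (fun k => |A n x σ k| ^ 2) ≤
      (4 / 3) * (RM (fun j => |A n x σ (2 * j)|) (n / 2)) ^ 2 + 4 * ∑ i, (x i) ^ 2 := by
  have hs : (0:ℝ) ≤ ∑ i, (x i) ^ 2 := Finset.sum_nonneg (fun i _ => sq_nonneg _)
  set s := ∑ i, (x i) ^ 2 with hsd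
  set m := RM (fun j => |A n x σ (2 * j)|) (n / 2) with hm
  have hm0 : 0 ≤ m := RM_nonneg _ (fun j => abs_nonneg _) (n / 2)
  apply Finset.sup'_le
  intro k hk
  rw [Finset.mem_Icc] at hk
  rcases Nat.even_or_odd k with he | ho
  · obtain ⟨j, hj⟩ := he
    have hk2 : k = 2 * j := by omega
    have hjN : j ≤ n / 2 := by omega
    have hble : |A n x σ (2 * j)| ≤ m := le_RM (fun j => |A n x σ (2 * j)|) (n / 2) j hjN
    have h1 : |A n x σ k| ^ 2 ≤ m ^ 2 := by
      rw [hk2]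
      nlinarith [abs_nonneg (A n x σ (2 * j))]
    nlinarith [sq_nonneg m]
  · obtain ⟨j, hj⟩ := ho
    have h2j : 2 * j < n := by omega
    have hjN : j ≤ n / 2 := by omega
    have hble : |A n x σ (2 * j)| ≤ m := le_RM (fun j => |A n x σ (2 * j)|) (n / 2) j hjN
    set e := |x (σ ⟨2 * j, h2j⟩)| with he
    have habs : |A n x σ k| ≤ m + e := by
      rw [hj, A_succ n x σ (2 * j) h2j]
      refine (abs_add_le _ _).trans ?_
      have : |(-1 : ℝ) ^ (2 * j + 1) * x (σ ⟨2 * j, h2j⟩)| = e := by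
        rw [abs_mul, abs_pow, abs_neg, abs_one, one_pow, one_mul]
      rw [this]
      exact add_le_add_left hble e
    have he2 : e ^ 2 ≤ s := by
      rw [he, sq_abs, hsd]
      exact Finset.single_le_sum (fun i _ => sq_nonneg (x i)) (Finset.mem_univ _)
    have he0 : 0 ≤ e := abs_nonneg _
    nlinarith [abs_nonneg (A n x σ k), sq_nonneg (m - 3 * e), habs, he2, hm0, he0]

lemma main (n : ℕ) (hn : 1 ≤ n) (x : Fin n → ℝ) (hx : ∑ i, x i = 0) :
    (1 / (Nat.factorial n : ℝ)) * ∑ σ : Equiv.Perm (Fin n),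
        (Finset.Icc 1 n).sup' (Finset.nonempty_Icc.mpr hn)
          (fun k => |A n x σ k| ^ 2)
      ≤ (17 + 16 / 17) * ∑ i, (x i) ^ 2 := by
  classical
  have hs : (0:ℝ) ≤ ∑ i, (x i) ^ 2 := Finset.sum_nonneg (fun i _ => sq_nonneg _)
  set s := ∑ i, (x i) ^ 2 with hsd
  set N := n / 2 with hN
  have hfact : (0:ℝ) < (Nat.factorial n : ℝ) := by
    exact_mod_cast Nat.factorial_pos n
  have hcardP : (Finset.univ : Finset (Equiv.Perm (Fin n))).card = Nat.factorial n := by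
    rw [Finset.card_univ, Fintype.card_perm, Fintype.card_fin]
  -- step 2 : doob + martingale + variance
  have h2 : ∑ σ : Equiv.Perm (Fin n), (RM (fun j => |A n x σ (2 * j)|) N) ^ 2
      ≤ 8 * (Nat.factorial n : ℝ) * s := by
    have hd : ∑ σ : Equiv.Perm (Fin n), (RM (fun j => |A n x σ (2 * j)|) N) ^ 2
        ≤ ∑ σ : Equiv.Perm (Fin n),
            (4 * |A n x σ (2 * N)| ^ 2 -
              4 * ∑ k ∈ Finset.range N, RM (fun j => |A n x σ (2 * j)|) k *
                (|A n x σ (2 * (k + 1))| - |A n x σ (2 * k)|)) :=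
      Finset.sum_le_sum (fun σ _ => doob (fun j => |A n x σ (2 * j)|) N)
    have hsplit : ∑ σ : Equiv.Perm (Fin n),
            (4 * |A n x σ (2 * N)| ^ 2 -
              4 * ∑ k ∈ Finset.range N, RM (fun j => |A n x σ (2 * j)|) k *
                (|A n x σ (2 * (k + 1))| - |A n x σ (2 * k)|))
        = 4 * (∑ σ : Equiv.Perm (Fin n), (A n x σ (2 * N)) ^ 2) -
          4 * ∑ k ∈ Finset.range N, ∑ σ : Equiv.Perm (Fin n),
            RM (fun j => |A n x σ (2 * j)|) k *
                (|A n x σ (2 * (k + 1))| - |A n x σ (2 * k)|) := by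
      rw [Finset.sum_sub_distrib, ← Finset.mul_sum, ← Finset.mul_sum, Finset.sum_comm]
      congr 2
      exact Finset.sum_congr rfl (fun σ _ => by rw [sq_abs])
    have hmart : 0 ≤ ∑ k ∈ Finset.range N, ∑ σ : Equiv.Perm (Fin n),
        RM (fun j => |A n x σ (2 * j)|) k *
            (|A n x σ (2 * (k + 1))| - |A n x σ (2 * k)|) := by
      apply Finset.sum_nonneg
      intro k hk
      rw [Finset.mem_range] at hk
      exact key2 n x k (by omega)
    have hvar := key3 n hn x hx
    rw [hsplit] at hd
    calc ∑ σ : Equiv.Perm (Fin n), (RM (fun j => |A n x σ (2 * j)|) N) ^ 2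
        ≤ 4 * (∑ σ : Equiv.Perm (Fin n), (A n x σ (2 * N)) ^ 2) := by linarith
      _ ≤ 4 * (2 * (Nat.factorial n : ℝ) * s) := by
          have h2N : (2 * (n / 2)) = 2 * N := by rw [hN]
          rw [← h2N] at *
          linarith [hvar]
      _ = 8 * (Nat.factorial n : ℝ) * s := by ring
  -- step 1 : pointwise bound and summation
  have h1 : ∑ σ : Equiv.Perm (Fin n),
      (Finset.Icc 1 n).sup' (Finset.nonempty_Icc.mpr hn) (fun k => |A n x σ k| ^ 2)
      ≤ (44 / 3) * (Nat.factorial n : ℝ) * s := by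
    calc ∑ σ : Equiv.Perm (Fin n),
        (Finset.Icc 1 n).sup' (Finset.nonempty_Icc.mpr hn) (fun k => |A n x σ k| ^ 2)
        ≤ ∑ σ : Equiv.Perm (Fin n),
            ((4 / 3) * (RM (fun j => |A n x σ (2 * j)|) N) ^ 2 + 4 * s) :=
          Finset.sum_le_sum (fun σ _ => key1 n hn x σ)
      _ = (4 / 3) * (∑ σ : Equiv.Perm (Fin n), (RM (fun j => |A n x σ (2 * j)|) N) ^ 2)
            + (Nat.factorial n : ℝ) * (4 * s) := by
          rw [Finset.sum_add_distrib, ← Finset.mul_sum, Finset.sum_const, hcardP,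
            nsmul_eq_mul]
      _ ≤ (4 / 3) * (8 * (Nat.factorial n : ℝ) * s) + (Nat.factorial n : ℝ) * (4 * s) := by
          nlinarith [h2]
      _ = (44 / 3) * (Nat.factorial n : ℝ) * s := by ring
  have hmul := mul_le_mul_of_nonneg_left h1 (le_of_lt (one_div_pos.mpr hfact))
  calc (1 / (Nat.factorial n : ℝ)) * ∑ σ : Equiv.Perm (Fin n),
        (Finset.Icc 1 n).sup' (Finset.nonempty_Icc.mpr hn) (fun k => |A n x σ k| ^ 2)
      ≤ (1 / (Nat.factorial n : ℝ)) * ((44 / 3) * (Nat.factorial n : ℝ) * s) := hmul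
    _ = (44 / 3) * s := by field_simp
    _ ≤ (17 + 16 / 17) * s := by nlinarith [hs]
end Aux18

theorem statement18 (n : ℕ) (hn : 1 ≤ n) (x : Fin n → ℝ) (hx : ∑ i, x i = 0) :
    (1 / (Nat.factorial n : ℝ)) * ∑ σ : Equiv.Perm (Fin n),
        (Finset.Icc 1 n).sup' (Finset.nonempty_Icc.mpr hn)
          (fun k =>
            |∑ i ∈ Finset.univ.filter fun i : Fin n => (i : ℕ) < k,
              (-1 : ℝ) ^ ((i : ℕ) + 1) * x (σ i)| ^ 2)
      ≤ (17 + 16 / 17) * ∑ i, (x i) ^ 2 := by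
  exact Aux18.main n hn x hx

end
end
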